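/- arXiv:1801.08782 — 2 statements merged into one kernel-verified Lean document; each statement's English description precedes it below -/
import Mathlib

section
/- Let Γ be a tetravalent G-half-arc-transitive graph for some G ≤ Aut(Γ) with att_G(Γ) < 2·rad_G(Γ). Then K_G(Γ_B) = K_G(Alt_G(Γ)) = K_G(A), i.e. the kernel of the action of G on the quotient graph Γ_B, the kernel of the action of G on the graph Alt_G(Γ) of G-alternating cycles, and the kernel of the action of G on the set A of all G-attachment sets all coincide. -/
/-! Common definitions for tetravalent half-arc-transitive graph theory. -/

open SimpleGraph Set

namespace HalfArc

variable {V W : Type*}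

/-- A subgroup of automorphisms acts transitively on the vertices. -/
def IsVertexTrans (Γ : SimpleGraph V) (G : Subgroup (Γ ≃g Γ)) : Prop :=
  ∀ u v : V, ∃ g ∈ G, g u = v

/-- A subgroup of automorphisms acts transitively on the edges. -/
def IsEdgeTrans (Γ : SimpleGraph V) (G : Subgroup (Γ ≃g Γ)) : Prop :=
  ∀ ⦃u v u' v' : V⦄, Γ.Adj u v → Γ.Adj u' v' →
    ∃ g ∈ G, (g u = u' ∧ g v = v') ∨ (g u = v' ∧ g v = u')

/-- A subgroup of automorphisms acts transitively on the arcs (ordered pairs of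
adjacent vertices). -/
def IsArcTrans (Γ : SimpleGraph V) (G : Subgroup (Γ ≃g Γ)) : Prop :=
  ∀ ⦃u v u' v' : V⦄, Γ.Adj u v → Γ.Adj u' v' → ∃ g ∈ G, g u = u' ∧ g v = v'

/-- Half-arc-transitive: vertex- and edge- but not arc-transitive. -/
def IsHalfArcTrans (Γ : SimpleGraph V) (G : Subgroup (Γ ≃g Γ)) : Prop :=
  IsVertexTrans Γ G ∧ IsEdgeTrans Γ G ∧ ¬ IsArcTrans Γ G

/-- An alternating cycle of length `n` in a graph `Γ` whose edges carry an
orientation `O`: a cyclic sequence of pairwise distinct vertices in which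
consecutive vertices are adjacent and any two consecutive edges have opposite
orientations. -/
structure AltCycle (Γ : SimpleGraph V) (O : V → V → Prop) (n : ℕ) where
  f : ZMod n → V
  inj : Function.Injective f
  adj : ∀ i, Γ.Adj (f i) (f (i + 1))
  alt : ∀ i, O (f i) (f (i + 1)) ↔ O (f (i + 2)) (f (i + 1))

/-- The vertex set of an alternating cycle. -/
def cycVerts {Γ : SimpleGraph V} {O : V → V → Prop} {n : ℕ} (c : AltCycle Γ O n) : Set V :=
  Set.range c.f

/-- The edge set of an alternating cycle. -/
def cycEdges {Γ : SimpleGraph V} {O : V → V → Prop} {n : ℕ} (c : AltCycle Γ O n) :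
    Set (Sym2 V) :=
  Set.range fun i => s(c.f i, c.f (i + 1))

/-- The sets of edges of alternating cycles (an alternating cycle, as a subgraph,
is determined by its edge set). -/
def IsAltEdgeSet (Γ : SimpleGraph V) (O : V → V → Prop) (n : ℕ) (E : Set (Sym2 V)) : Prop :=
  ∃ c : AltCycle Γ O n, cycEdges c = E

/-- The vertex sets of alternating cycles. -/
def IsAltVertSet (Γ : SimpleGraph V) (O : V → V → Prop) (n : ℕ) (A : Set V) : Prop :=
  ∃ c : AltCycle Γ O n, cycVerts c = A

/-- The set of vertices covered by a set of edges. -/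
def suppOf (E : Set (Sym2 V)) : Set V := {v | ∃ e ∈ E, v ∈ e}

/-- The graph of alternating cycles: its vertices are the alternating cycles
(represented by their edge sets), two of them adjacent whenever they share a vertex. -/
def altGraph (Γ : SimpleGraph V) (O : V → V → Prop) (n : ℕ) :
    SimpleGraph {E : Set (Sym2 V) // IsAltEdgeSet Γ O n E} where
  Adj X Y := X ≠ Y ∧ (suppOf X.1 ∩ suppOf Y.1).Nonempty
  symm := by
    constructor
    rintro X Y ⟨hne, x, hx1, hx2⟩
    exact ⟨hne.symm, x, hx2, hx1⟩
  loopless := by constructor; rintro X ⟨hne, -⟩; exact hne rfl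

/-- The attachment sets: nonempty intersections of (the vertex sets of) two distinct
alternating cycles. -/
def IsAttSet (Γ : SimpleGraph V) (O : V → V → Prop) (n : ℕ) (A : Set V) : Prop :=
  ∃ c c' : AltCycle Γ O n, cycEdges c ≠ cycEdges c' ∧ (cycVerts c ∩ cycVerts c').Nonempty ∧
    A = cycVerts c ∩ cycVerts c'

/-- `attachmentIs Γ O n a` : any two distinct alternating cycles with nonempty
intersection meet in exactly `a` vertices. -/
def attachmentIs (Γ : SimpleGraph V) (O : V → V → Prop) (n a : ℕ) : Prop :=
  ∀ A : Set V, IsAttSet Γ O n A → A.ncard = a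

/-- A `k`-step rotation of an alternating cycle (in one of the two directions). -/
def IsRot {Γ : SimpleGraph V} {O : V → V → Prop} {n : ℕ} (c : AltCycle Γ O n)
    (g : V → V) (k : ℕ) : Prop :=
  (∀ i, g (c.f i) = c.f (i + k)) ∨ (∀ i, g (c.f i) = c.f (i - k))

/-- The setup of the paper: a finite connected tetravalent graph `Γ`, a subgroup `G`
of its automorphism group acting half-arc-transitively, one of the two `G`-induced
orientations `O` of the edges of `Γ` (an orbit of `G` on arcs), the `G`-radius `r`
(half the common length of all `G`-alternating cycles) and the `G`-attachment
number `att`, together with the basic structural facts relating them. -/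
structure Setup (V : Type*) where
  Γ : SimpleGraph V
  finite : Finite V
  conn : Γ.Connected
  tetra : ∀ v : V, (Γ.neighborSet v).ncard = 4
  G : Subgroup (Γ ≃g Γ)
  hat : IsHalfArcTrans Γ G
  O : V → V → Prop
  O_adj : ∀ ⦃u v⦄, O u v → Γ.Adj u v
  O_choice : ∀ ⦃u v⦄, Γ.Adj u v → (O u v ↔ ¬ O v u)
  O_inv : ∀ g ∈ G, ∀ ⦃u v⦄, O u v → O (g u) (g v)
  O_orbit : ∀ ⦃u v u' v'⦄, O u v → O u' v' → ∃ g ∈ G, g u = u' ∧ g v = v'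
  r : ℕ
  r_pos : 0 < r
  /-- every vertex lies on exactly two `G`-alternating cycles, each of length `2 * r` -/
  alt_cover : ∀ v : V, {E : Set (Sym2 V) | IsAltEdgeSet Γ O (2 * r) E ∧ v ∈ suppOf E}.ncard = 2
  att : ℕ
  att_pos : 0 < att
  /-- any two non-disjoint `G`-alternating cycles meet in exactly `att` vertices -/
  att_eq : attachmentIs Γ O (2 * r) att
  att_dvd : att ∣ 2 * r

namespace Setup

variable {V : Type*} (S : Setup V)

/-- The kernel of the action of `G` on the set of `G`-alternating cycles:
the elements of `G` fixing every `G`-alternating cycle setwise. -/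
def altKernel : Subgroup (S.Γ ≃g S.Γ) where
  carrier := {g | g ∈ S.G ∧ ∀ E : Set (Sym2 V),
    IsAltEdgeSet S.Γ S.O (2 * S.r) E → Sym2.map (g : V → V) '' E = E}
  one_mem' := by
    refine ⟨S.G.one_mem, fun E _ => ?_⟩
    have : Sym2.map ((1 : S.Γ ≃g S.Γ) : V → V) = id := by
      funext e
      have : ((1 : S.Γ ≃g S.Γ) : V → V) = id := rfl
      rw [this, Sym2.map_id, id]
    rw [this, Set.image_id]
  mul_mem' := by
    rintro g h ⟨hg, hg'⟩ ⟨hh, hh'⟩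
    refine ⟨S.G.mul_mem hg hh, fun E hE => ?_⟩
    have hcomp : Sym2.map ((g * h : S.Γ ≃g S.Γ) : V → V)
        = Sym2.map (g : V → V) ∘ Sym2.map (h : V → V) := by
      funext e
      have : ((g * h : S.Γ ≃g S.Γ) : V → V) = (g : V → V) ∘ (h : V → V) := rfl
      rw [this, Function.comp_apply, ← Sym2.map_map]
    rw [hcomp, Set.image_comp, hh' E hE, hg' E hE]
  inv_mem' := by
    rintro g ⟨hg, hg'⟩
    refine ⟨S.G.inv_mem hg, fun E hE => ?_⟩
    conv_lhs => rw [← hg' E hE]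
    rw [← Set.image_comp]
    have : Sym2.map ((g⁻¹ : S.Γ ≃g S.Γ) : V → V) ∘ Sym2.map (g : V → V) = id := by
      funext e
      rw [Function.comp_apply, Sym2.map_map]
      have h1 : ((g⁻¹ : S.Γ ≃g S.Γ) : V → V) ∘ (g : V → V) = id := by
        funext v
        exact g.toEquiv.symm_apply_apply v
      rw [h1, Sym2.map_id]
    rw [this, Set.image_id]

/-- The kernel of the action of `G` on a collection of sets of vertices. -/
def kernelOn (P : Set V → Prop) : Subgroup (S.Γ ≃g S.Γ) where
  carrier := {g | g ∈ S.G ∧ ∀ A : Set V, P A → (g : V → V) '' A = A}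
  one_mem' := ⟨S.G.one_mem, fun A _ => by
    have : ((1 : S.Γ ≃g S.Γ) : V → V) = id := rfl
    rw [this, Set.image_id]⟩
  mul_mem' := by
    rintro g h ⟨hg, hg'⟩ ⟨hh, hh'⟩
    refine ⟨S.G.mul_mem hg hh, fun A hA => ?_⟩
    have : ((g * h : S.Γ ≃g S.Γ) : V → V) = (g : V → V) ∘ (h : V → V) := rfl
    rw [this, Set.image_comp, hh' A hA, hg' A hA]
  inv_mem' := by
    rintro g ⟨hg, hg'⟩
    refine ⟨S.G.inv_mem hg, fun A hA => ?_⟩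
    conv_lhs => rw [← hg' A hA]
    rw [← Set.image_comp]
    have : ((g⁻¹ : S.Γ ≃g S.Γ) : V → V) ∘ (g : V → V) = id := by
      funext v; exact g.toEquiv.symm_apply_apply v
    rw [this, Set.image_id]

/-- The kernel of the action of `G` on the set of all `G`-attachment sets. -/
def attKernel : Subgroup (S.Γ ≃g S.Γ) :=
  S.kernelOn (IsAttSet S.Γ S.O (2 * S.r))

/-- The block `B_s(C; u_i) = {u_{i+2sj} : 0 ≤ j < att}` of Construction 5.3. -/
def blockSet (s : ℕ) (c : AltCycle S.Γ S.O (2 * S.r)) (i : ZMod (2 * S.r)) : Set V :=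
  {v | ∃ j : ℕ, j < S.att ∧ v = c.f (i + (2 * s * j : ℕ))}

/-- The imprimitivity block system `B` of Construction 5.3. -/
def Blocks (s : ℕ) : Set (Set V) :=
  {A | ∃ (c : AltCycle S.Γ S.O (2 * S.r)) (i : ZMod (2 * S.r)), A = S.blockSet s c i}

/-- The quotient graph `Γ_B` of `Γ` with respect to the block system `B`. -/
def quotGraph (s : ℕ) : SimpleGraph {A : Set V // A ∈ S.Blocks s} where
  Adj X Y := X ≠ Y ∧ ∃ u ∈ X.1, ∃ v ∈ Y.1, S.Γ.Adj u v
  symm := by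
    constructor
    rintro X Y ⟨hne, u, hu, v, hv, ha⟩
    exact ⟨hne.symm, v, hv, u, hu, ha.symm⟩
  loopless := by constructor; rintro X ⟨hne, -⟩; exact hne rfl

/-- The kernel of the action of `G` on the quotient graph `Γ_B`. -/
def quotKernel (s : ℕ) : Subgroup (S.Γ ≃g S.Γ) :=
  S.kernelOn (· ∈ S.Blocks s)

/-- The orientation of the edges of the quotient graph `Γ_B` induced by `O`. -/
def quotO (s : ℕ) (X Y : {A : Set V // A ∈ S.Blocks s}) : Prop :=
  ∃ u ∈ X.1, ∃ v ∈ Y.1, S.O u v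

end Setup

/-- The data defining the parameters `q_t` and `q_h` of Section 3: a vertex `v`,
the two `G`-alternating cycles `c` and `c'` through `v` (with `v = u_0 = v_0` and
`v` the tail of the two arcs of `c` incident to it), and the minimality properties
defining `q_t` and `q_h`.  Here `ell = 2r/att`. -/
structure JumpData {V : Type*} (S : Setup V) where
  v : V
  c : AltCycle S.Γ S.O (2 * S.r)
  c' : AltCycle S.Γ S.O (2 * S.r)
  ell : ℕ
  hell : S.att * ell = 2 * S.r
  hc : c.f 0 = v
  hc' : c'.f 0 = v
  hne : cycEdges c ≠ cycEdges c'
  htail₁ : S.O v (c.f 1)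
  htail₂ : S.O v (c.f (-1))
  qt : ℕ
  qh : ℕ
  hqt : c'.f ((qt * ell : ℕ)) = c.f ((ell : ℕ)) ∨
    c'.f ((qt * ell : ℕ)) = c.f (-(ell : ZMod (2 * S.r)))
  hqt_min : ∀ m : ℕ, m < qt → ¬(c'.f ((m * ell : ℕ)) = c.f ((ell : ℕ)) ∨
    c'.f ((m * ell : ℕ)) = c.f (-(ell : ZMod (2 * S.r))))
  hqh : c.f ((qh * ell : ℕ)) = c'.f ((ell : ℕ)) ∨
    c.f ((qh * ell : ℕ)) = c'.f (-(ell : ZMod (2 * S.r)))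
  hqh_min : ∀ m : ℕ, m < qh → ¬(c.f ((m * ell : ℕ)) = c'.f ((ell : ℕ)) ∨
    c.f ((m * ell : ℕ)) = c'.f (-(ell : ZMod (2 * S.r))))

/-- The `G`-alternating jump `jum_G(Γ) = min {q_t, q_h}`. -/
def JumpData.jump {V : Type*} {S : Setup V} (J : JumpData S) : ℕ := min J.qt J.qh


/-! ### Auxiliary machinery for the proof of Statement 10 -/

section Aux

variable {V : Type*} {Γ : SimpleGraph V} {O : V → V → Prop} {n : ℕ}

lemma suppOf_map (g : V → V) (E : Set (Sym2 V)) :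
    suppOf (Sym2.map g '' E) = g '' suppOf E := by
  ext v
  constructor
  · rintro ⟨e, ⟨e', he', rfl⟩, hv⟩
    obtain ⟨w, hw, rfl⟩ := Sym2.mem_map.1 hv
    exact ⟨w, ⟨e', he', hw⟩, rfl⟩
  · rintro ⟨w, ⟨e, he, hw⟩, rfl⟩
    exact ⟨Sym2.map g e, ⟨e, he, rfl⟩, Sym2.mem_map.2 ⟨w, hw, rfl⟩⟩

lemma verts_eq_supp (c : AltCycle Γ O n) : cycVerts c = suppOf (cycEdges c) := by
  ext v
  constructor
  · rintro ⟨i, rfl⟩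
    exact ⟨s(c.f i, c.f (i+1)), ⟨i, rfl⟩, by simp⟩
  · rintro ⟨e, ⟨i, rfl⟩, hv⟩
    rcases Sym2.mem_iff.1 hv with h | h
    exacts [⟨i, h.symm⟩, ⟨i + 1, h.symm⟩]

lemma edge_mem (c : AltCycle Γ O n) (i : ZMod n) : s(c.f i, c.f (i+1)) ∈ cycEdges c := ⟨i, rfl⟩

lemma mem_edge_cases (c : AltCycle Γ O n) {e : Sym2 V} (he : e ∈ cycEdges c) {x : V}
    (hx : x ∈ e) {m : ZMod n} (hm : c.f m = x) :
    e = s(c.f (m-1), x) ∨ e = s(x, c.f (m+1)) := by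
  obtain ⟨j, rfl⟩ := he
  rcases Sym2.mem_iff.1 hx with h | h
  · right
    have hjm : j = m := c.inj (hm.trans h).symm
    subst hjm; simp only []; rw [hm]
  · left
    have hjm : j + 1 = m := c.inj (hm.trans h).symm
    have hj : j = m - 1 := by rw [← hjm]; ring
    subst hj
    simp only []
    rw [sub_add_cancel, hm]

namespace Setup

variable {V : Type*} (S : Setup V)

/-- Exactly one of the two directions of an edge is in the orientation. -/
lemma oneDir {u v : V} (h : S.Γ.Adj u v) :
    (S.O u v ∧ ¬ S.O v u) ∨ (S.O v u ∧ ¬ S.O u v) := by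
  by_cases ho : S.O u v
  · exact Or.inl ⟨ho, (S.O_choice h).1 ho⟩
  · have := (S.O_choice h.symm)
    by_cases ho' : S.O v u
    · exact Or.inr ⟨ho', ho⟩
    · exact absurd ((S.O_choice h).2 ( by
        intro hvu; exact ho' hvu)) ho

/-- Elements of `G` preserve the orientation in both directions. -/
lemma O_iff {g : S.Γ ≃g S.Γ} (hg : g ∈ S.G) {u v : V} (ha : S.Γ.Adj u v) :
    S.O u v ↔ S.O (g u) (g v) := by
  have hadj : S.Γ.Adj (g u) (g v) := g.map_adj_iff.2 ha
  constructor
  · exact fun h => S.O_inv g hg h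
  · intro h
    rcases S.oneDir ha with ⟨h1, -⟩ | ⟨h1, h2⟩
    · exact h1
    · exact absurd (S.O_inv g hg h1) ((S.O_choice hadj).1 h)

/-- The image of an alternating cycle under an element of `G`. -/
def gcyc {g : S.Γ ≃g S.Γ} (hg : g ∈ S.G) (c : AltCycle S.Γ S.O (2 * S.r)) :
    AltCycle S.Γ S.O (2 * S.r) where
  f := fun i => g (c.f i)
  inj := fun i j hij => c.inj (g.injective hij)
  adj := fun i => g.map_adj_iff.2 (c.adj i)
  alt := fun i => by
    show S.O (g (c.f i)) (g (c.f (i+1))) ↔ S.O (g (c.f (i+2))) (g (c.f (i+1)))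
    have h2 : S.Γ.Adj (c.f (i + 2)) (c.f (i + 1)) := by
      have := (c.adj (i+1)).symm
      rwa [show i+1+1 = i+2 by ring] at this
    rw [← S.O_iff hg (c.adj i), ← S.O_iff hg h2]
    exact c.alt i

lemma gcyc_verts {g : S.Γ ≃g S.Γ} (hg : g ∈ S.G) (c : AltCycle S.Γ S.O (2 * S.r)) :
    cycVerts (S.gcyc hg c) = (g : V → V) '' cycVerts c := by
  show Set.range ((g : V → V) ∘ c.f) = (g : V → V) '' Set.range c.f
  exact Set.range_comp _ _

lemma gcyc_edges {g : S.Γ ≃g S.Γ} (hg : g ∈ S.G) (c : AltCycle S.Γ S.O (2 * S.r)) :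
    cycEdges (S.gcyc hg c) = Sym2.map (g : V → V) '' cycEdges c := by
  have : (fun i => s((S.gcyc hg c).f i, (S.gcyc hg c).f (i+1)))
      = (Sym2.map (g : V → V)) ∘ (fun i => s(c.f i, c.f (i+1))) := by
    funext i
    simp [gcyc, Sym2.map_pair_eq]
  show Set.range _ = _
  rw [this, Set.range_comp]
  rfl

end Setup

/-- A set invariant under translation by `u` is invariant under integer multiples of `u`. -/
lemma add_invariant_zsmul {m : ℕ} {Q : Set (ZMod m)} {u : ZMod m}
    (h : (· + u) '' Q = Q) : ∀ z : ℤ, ∀ x ∈ Q, x + z • u ∈ Q := by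
  have hsucc : ∀ x ∈ Q, x + u ∈ Q := by
    intro x hx
    rw [← h]
    exact ⟨x, hx, rfl⟩
  have hpred : ∀ x ∈ Q, x - u ∈ Q := by
    intro x hx
    rw [← h] at hx
    obtain ⟨p, hp, hpx⟩ := hx
    simp only [] at hpx
    rw [← hpx]
    simpa using hp
  intro z
  induction z using Int.induction_on with
  | zero => simpa using fun x hx => hx
  | succ k ih =>
    intro x hx
    have h1 := hsucc _ (ih x hx)
    have h2 : x + (k : ℤ) • u + u = x + ((k : ℤ) + 1) • u := by
      rw [add_smul, one_smul, add_assoc]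
    rwa [h2] at h1
  | pred k ih =>
    intro x hx
    have h1 := hpred _ (ih x hx)
    have h2 : x + (-(k : ℤ)) • u - u = x + (-(k : ℤ) - 1) • u := by
      rw [sub_smul, one_smul, ← add_sub_assoc]
    rwa [h2] at h1

/-- If a finite set in `ZMod m` is invariant under translation by `u`, its cardinality is
divisible by the additive order of `u`. -/
lemma add_invariant_ncard_dvd {m : ℕ} [NeZero m] {Q : Set (ZMod m)} {u : ZMod m}
    (h : (· + u) '' Q = Q) : addOrderOf u ∣ Q.ncard := by
  classical
  have hz := add_invariant_zsmul h
  set H := AddSubgroup.zmultiples u with hH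
  have hcoset : ∀ x ∈ Q, ∀ y : ZMod m, y - x ∈ H → y ∈ Q := by
    intro x hx y hy
    obtain ⟨z, hz'⟩ := hy
    have hmem := hz z x hx
    simp only [] at hz'
    rw [hz'] at hmem
    simpa using hmem
  let φ : ZMod m → ZMod m ⧸ H := QuotientAddGroup.mk
  have hHcard : (H : Set (ZMod m)).toFinset.card = addOrderOf u := by
    rw [← Set.ncard_eq_toFinset_card', ← Nat.card_coe_set_eq, ← Nat.card_zmultiples u]
    rfl
  rw [Set.ncard_eq_toFinset_card' Q]
  rw [Finset.card_eq_sum_card_fiberwise (f := φ) (t := Q.toFinset.image φ)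
    (fun x hx => Finset.mem_image_of_mem φ hx)]
  have hfib : ∀ b ∈ Q.toFinset.image φ,
      (Q.toFinset.filter (fun y => φ y = b)).card = addOrderOf u := by
    intro b hb
    obtain ⟨x, hx, rfl⟩ := Finset.mem_image.1 hb
    have hxQ : x ∈ Q := Set.mem_toFinset.1 hx
    rw [← hHcard]
    apply Finset.card_bij (fun y _ => y - x)
    · intro y hy
      simp only [Finset.mem_filter, Set.mem_toFinset] at hy
      rw [Set.mem_toFinset]
      have := (QuotientAddGroup.eq (s := H)).1 hy.2
      have hyx : y - x ∈ H := by
        rw [sub_eq_neg_add]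
        have := H.neg_mem this
        simpa using this
      exact hyx
    · intro y1 hy1 y2 hy2 hyy
      exact sub_left_injective hyy
    · intro hmem hh
      rw [Set.mem_toFinset] at hh
      refine ⟨x + hmem, ?_, by ring⟩
      rw [Finset.mem_filter, Set.mem_toFinset]
      constructor
      · exact hcoset x hxQ _ (by simpa using hh)
      · show φ (x + hmem) = φ x
        rw [QuotientAddGroup.eq (s := H)]
        have := H.neg_mem hh
        simpa using this
  rw [Finset.sum_congr rfl hfib, Finset.sum_const, smul_eq_mul]
  exact ⟨(Q.toFinset.image φ).card, by ring⟩


namespace Setup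

variable {V : Type*} (S : Setup V)

lemma nz : NeZero (2 * S.r) := ⟨by have := S.r_pos; omega⟩

lemma ncard_verts (c : AltCycle S.Γ S.O (2 * S.r)) : (cycVerts c).ncard = 2 * S.r := by
  haveI := S.finite
  haveI := S.nz
  rw [cycVerts, ← Set.image_univ, Set.ncard_image_of_injective _ c.inj, Set.ncard_univ,
    Nat.card_zmod]

/-- The set of alternating cycles (as edge sets) through a vertex. -/
def coverSet (v : V) : Set (Set (Sym2 V)) :=
  {E | IsAltEdgeSet S.Γ S.O (2 * S.r) E ∧ v ∈ suppOf E}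

lemma coverSet_ncard (v : V) : (S.coverSet v).ncard = 2 := S.alt_cover v

lemma zmod_two_cases (h2 : 2 * S.r = 2) (i : ZMod (2 * S.r)) : i = 0 ∨ i = 1 := by
  haveI := S.nz
  have hv : i.val < 2 := by have := ZMod.val_lt i; omega
  have hi : i = ((i.val : ℕ) : ZMod (2 * S.r)) := by simp [ZMod.natCast_val, ZMod.cast_id]
  have : i.val = 0 ∨ i.val = 1 := by omega
  rcases this with h | h
  · left; rw [hi, h]; simp
  · right; rw [hi, h]; simp

lemma natCast_zmod_ne (a : ℕ) (ha : 0 < a) (hb : a < 2 * S.r) : ((a : ZMod (2 * S.r)) ≠ 0) := by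
  haveI := S.nz
  rw [Ne, ZMod.natCast_eq_zero_iff]
  intro hdvd
  have := Nat.le_of_dvd ha hdvd
  omega

/-- The radius is at least `2`, i.e. alternating cycles have length at least `4`. -/
lemma four_le : 4 ≤ 2 * S.r := by
  haveI := S.finite
  haveI := S.nz
  by_contra hlt
  have h2 : 2 * S.r = 2 := by have := S.r_pos; omega
  obtain ⟨v⟩ := S.conn.nonempty
  have h10 : (1 : ZMod (2 * S.r)) ≠ 0 := by
    have := S.natCast_zmod_ne 1 (by omega) (by omega)
    simpa using this
  have h20 : (2 : ZMod (2 * S.r)) = 0 := by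
    have : ((2 : ℕ) : ZMod (2 * S.r)) = 0 := by
      rw [ZMod.natCast_eq_zero_iff, h2]
    simpa using this
  -- for each neighbor `u` of `v`, the single edge `{v, u}` is an alternating cycle
  have key : ∀ u ∈ S.Γ.neighborSet v, ∃ E ∈ S.coverSet v, E = {s(v, u)} := by
    intro u hu
    have hadj : S.Γ.Adj v u := hu
    refine ⟨{s(v, u)}, ⟨⟨⟨fun i => if i = 0 then v else u, ?_, ?_, ?_⟩, ?_⟩, ?_⟩, rfl⟩
    · intro i j hij
      simp only [] at hij
      rcases S.zmod_two_cases h2 i with hi | hi <;> rcases S.zmod_two_cases h2 j with hj | hj <;>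
        subst hi <;> subst hj
      · rfl
      · rw [if_pos rfl, if_neg h10] at hij; exact absurd hij hadj.ne
      · rw [if_neg h10, if_pos rfl] at hij; exact absurd hij.symm hadj.ne
      · rfl
    · intro i
      rcases S.zmod_two_cases h2 i with hi | hi <;> subst hi
      · simpa [h10] using hadj
      · have : (1 : ZMod (2 * S.r)) + 1 = 0 := by
          rw [show (1 : ZMod (2 * S.r)) + 1 = 2 by ring, h20]
        rw [this]
        simpa [h10] using hadj.symm
    · intro i
      have : i + 2 = i := by rw [h20]; ring
      rw [this]
    · ext e
      simp only [cycEdges, Set.mem_range, Set.mem_singleton_iff]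
      constructor
      · rintro ⟨i, rfl⟩
        rcases S.zmod_two_cases h2 i with hi | hi <;> subst hi
        · simp [h10]
        · have h11 : (1 : ZMod (2 * S.r)) + 1 = 0 := by
            rw [show (1 : ZMod (2 * S.r)) + 1 = 2 by ring, h20]
          simp [h11, h10, Sym2.eq_swap]
      · rintro rfl
        exact ⟨0, by simp [h10]⟩
    · exact ⟨s(v, u), rfl, by simp⟩
  -- this gives an injection from the 4 neighbors into the coverSet of cardinality 2
  have hinj : Set.InjOn (fun u => ({s(v, u)} : Set (Sym2 V))) (S.Γ.neighborSet v) := by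
    intro u1 hu1 u2 hu2 he
    have heq : ({s(v, u1)} : Set (Sym2 V)) = {s(v, u2)} := he
    have : s(v, u1) = s(v, u2) := Set.singleton_eq_singleton_iff.1 heq
    rw [Sym2.eq_iff] at this
    rcases this with ⟨-, hx⟩ | ⟨hx, hx'⟩
    · exact hx
    · exact absurd hx (S.Γ.ne_of_adj hu2)
  have hsub : (fun u => ({s(v, u)} : Set (Sym2 V))) '' (S.Γ.neighborSet v) ⊆ S.coverSet v := by
    rintro E ⟨u, hu, rfl⟩
    obtain ⟨E', hE', hEq⟩ := key u hu
    show ({s(v, u)} : Set (Sym2 V)) ∈ S.coverSet v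
    exact hEq ▸ hE'
  have hcard : ((fun u => ({s(v, u)} : Set (Sym2 V))) '' (S.Γ.neighborSet v)).ncard = 4 := by
    rw [Set.ncard_image_of_injOn hinj, S.tetra v]
  have hle := Set.ncard_le_ncard hsub (Set.toFinite _)
  rw [hcard, S.coverSet_ncard] at hle
  omega

/-- The out-neighbourhood of a vertex. -/
def outSet (v : V) : Set V := {u | S.O v u}

/-- The in-neighbourhood of a vertex. -/
def inSet (v : V) : Set V := {u | S.O u v}

lemma outSet_subset (v : V) : S.outSet v ⊆ S.Γ.neighborSet v := fun u hu => S.O_adj hu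

lemma inSet_subset (v : V) : S.inSet v ⊆ S.Γ.neighborSet v := fun u hu => (S.O_adj hu).symm

/-- Every vertex has exactly two out-neighbours. -/
lemma outdeg_two (v : V) : (S.outSet v).ncard = 2 := by
  classical
  haveI := S.finite
  haveI : Fintype V := Fintype.ofFinite V
  set F : Finset (V × V) := Finset.univ.filter (fun p => S.O p.1 p.2) with hF
  -- `F` is in bijection with the edge set
  have himg : F.image (fun p => s(p.1, p.2)) = S.Γ.edgeFinset := by
    ext e
    induction e with
    | _ a b =>
      simp only [Finset.mem_image, SimpleGraph.mem_edgeFinset, SimpleGraph.mem_edgeSet]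
      constructor
      · rintro ⟨p, hp, hpe⟩
        have hO : S.O p.1 p.2 := by simpa [hF] using hp
        have hadj := S.O_adj hO
        rw [Sym2.eq_iff] at hpe
        rcases hpe with ⟨rfl, rfl⟩ | ⟨rfl, rfl⟩
        exacts [hadj, hadj.symm]
      · intro hadj
        rcases S.oneDir hadj with ⟨hO, -⟩ | ⟨hO, -⟩
        · exact ⟨(a, b), by simp [hF, hO], rfl⟩
        · exact ⟨(b, a), by simp [hF, hO], Sym2.eq_swap⟩
  have hinj : Set.InjOn (fun p : V × V => s(p.1, p.2)) ↑F := by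
    intro p hp q hq hpq
    have hOp : S.O p.1 p.2 := by simpa [hF] using hp
    have hOq : S.O q.1 q.2 := by simpa [hF] using hq
    simp only [] at hpq
    rw [Sym2.eq_iff] at hpq
    rcases hpq with ⟨h1, h2⟩ | ⟨h1, h2⟩
    · exact Prod.ext h1 h2
    · exfalso
      rw [← h1, ← h2] at hOq
      rcases S.oneDir (S.O_adj hOp) with ⟨-, hn⟩ | ⟨-, hn⟩
      exacts [hn hOq, hn hOp]
  have hFcard : F.card = S.Γ.edgeFinset.card := by
    rw [← himg, Finset.card_image_of_injOn hinj]
  -- the number of edges is `2 * |V|`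
  have hdeg : ∀ w : V, S.Γ.degree w = 4 := by
    intro w
    have := S.tetra w
    rwa [Set.ncard_eq_toFinset_card', Set.toFinset_card,
      SimpleGraph.card_neighborSet_eq_degree] at this
  have hsum := SimpleGraph.sum_degrees_eq_twice_card_edges S.Γ
  rw [Finset.sum_congr rfl (fun w _ => hdeg w), Finset.sum_const, Finset.card_univ,
    smul_eq_mul] at hsum
  -- `F.card` is the sum of the out-degrees
  have hfib : F.card = ∑ w : V, (Finset.univ.filter (fun u => S.O w u)).card := by
    rw [Finset.card_eq_sum_card_fiberwise (f := Prod.fst) (t := Finset.univ)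
      (fun p _ => Finset.mem_univ _)]
    refine Finset.sum_congr rfl fun w _ => ?_
    refine Finset.card_bij (fun p _ => p.2) ?_ ?_ ?_
    · rintro p hp
      simp only [Finset.mem_filter, hF, Finset.mem_univ, true_and] at hp ⊢
      rw [← hp.2]; exact hp.1
    · rintro p hp q hq hpq
      simp only [Finset.mem_filter, hF, Finset.mem_univ, true_and] at hp hq
      exact Prod.ext (hp.2.trans hq.2.symm) hpq
    · intro u hu
      simp only [Finset.mem_filter, Finset.mem_univ, true_and] at hu
      exact ⟨(w, u), by simp [hF, hu], rfl⟩
  -- the out-degree is constant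
  have hconst : ∀ w w' : V, (Finset.univ.filter (fun u => S.O w u)).card
      = (Finset.univ.filter (fun u => S.O w' u)).card := by
    intro w w'
    obtain ⟨g, hg, hgw⟩ := S.hat.1 w w'
    refine Finset.card_bij (fun u _ => g u) ?_ ?_ ?_
    · intro u hu
      simp only [Finset.mem_filter, Finset.mem_univ, true_and] at hu ⊢
      rw [← hgw]; exact S.O_inv g hg hu
    · intro u _ u' _ huu
      exact g.injective huu
    · intro y hy
      simp only [Finset.mem_filter, Finset.mem_univ, true_and] at hy
      refine ⟨g.symm y, ?_, ?_⟩
      · simp only [Finset.mem_filter, Finset.mem_univ, true_and]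
        have h1 : S.O (g⁻¹ w') (g⁻¹ y) := S.O_inv _ (S.G.inv_mem hg) hy
        have h2 : (g⁻¹ : S.Γ ≃g S.Γ) w' = w := by
          rw [← hgw]; exact g.toEquiv.symm_apply_apply w
        have h3 : (g⁻¹ : S.Γ ≃g S.Γ) y = g.symm y := rfl
        rwa [h2, h3] at h1
      · exact g.toEquiv.apply_symm_apply y
  -- combine
  have hcount : Fintype.card V * (Finset.univ.filter (fun u => S.O v u)).card
      = 2 * Fintype.card V := by
    calc Fintype.card V * (Finset.univ.filter (fun u => S.O v u)).card
        = ∑ _w : V, (Finset.univ.filter (fun u => S.O v u)).card := by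
          rw [Finset.sum_const, Finset.card_univ, smul_eq_mul]
      _ = ∑ w : V, (Finset.univ.filter (fun u => S.O w u)).card :=
          Finset.sum_congr rfl fun w _ => hconst v w
      _ = F.card := hfib.symm
      _ = S.Γ.edgeFinset.card := hFcard
      _ = 2 * Fintype.card V := by omega
  have hpos : 0 < Fintype.card V := Fintype.card_pos_iff.2 S.conn.nonempty
  have : (Finset.univ.filter (fun u => S.O v u)).card = 2 := by
    nlinarith [hcount]
  rw [show S.outSet v = ↑(Finset.univ.filter (fun u => S.O v u)) by
    ext u; simp [outSet]]
  rw [Set.ncard_coe_finset, this]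

/-- Every vertex has exactly two in-neighbours. -/
lemma indeg_two (v : V) : (S.inSet v).ncard = 2 := by
  haveI := S.finite
  have hdisj : Disjoint (S.outSet v) (S.inSet v) := by
    rw [Set.disjoint_left]
    intro u hout hin
    exact (S.O_choice (S.O_adj hout)).1 hout hin
  have hunion : S.outSet v ∪ S.inSet v = S.Γ.neighborSet v := by
    apply Set.Subset.antisymm (Set.union_subset (S.outSet_subset v) (S.inSet_subset v))
    intro u hu
    rcases S.oneDir (hu : S.Γ.Adj v u) with ⟨hO, -⟩ | ⟨hO, -⟩
    exacts [Or.inl hO, Or.inr hO]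
  have := S.tetra v
  rw [← hunion, Set.ncard_union_eq hdisj (Set.toFinite _) (Set.toFinite _),
    S.outdeg_two v] at this
  omega


lemma zmod_nat_ind {m : ℕ} [NeZero m] (P : ZMod m → Prop) (h : ∀ k : ℕ, P (k : ZMod m)) :
    ∀ i, P i := fun i => by
  have := h i.val
  rwa [ZMod.natCast_val, ZMod.cast_id] at this

lemma two_ne_zero' : (2 : ZMod (2 * S.r)) ≠ 0 := by
  have h4 := S.four_le
  have := S.natCast_zmod_ne 2 (by omega) (by omega)
  simpa using this

lemma one_ne_zero' : (1 : ZMod (2 * S.r)) ≠ 0 := by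
  have h4 := S.four_le
  have := S.natCast_zmod_ne 1 (by omega) (by omega)
  simpa using this

lemma adj_two (c : AltCycle S.Γ S.O (2 * S.r)) (i : ZMod (2 * S.r)) :
    S.Γ.Adj (c.f (i + 1)) (c.f (i + 2)) := by
  have := c.adj (i + 1)
  rwa [show i + 1 + 1 = i + 2 by ring] at this

/-- Orientations alternate along an alternating cycle. -/
lemma eps_succ (c : AltCycle S.Γ S.O (2 * S.r)) (i : ZMod (2 * S.r)) :
    S.O (c.f (i + 1)) (c.f (i + 1 + 1)) ↔ ¬ S.O (c.f i) (c.f (i + 1)) := by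
  rw [show i + 1 + 1 = i + 2 by ring]
  constructor
  · intro h hO
    exact (S.O_choice (S.adj_two c i).symm).1 ((c.alt i).1 hO) h
  · intro h
    rcases S.oneDir (S.adj_two c i) with ⟨hO, -⟩ | ⟨hO, -⟩
    · exact hO
    · exact absurd ((c.alt i).2 hO) h

/-- At each vertex of an alternating cycle, both cycle edges point in or both point out. -/
lemma cyc_dir (c : AltCycle S.Γ S.O (2 * S.r)) (i : ZMod (2 * S.r)) :
    (S.O (c.f i) (c.f (i + 1)) ∧ S.O (c.f (i + 2)) (c.f (i + 1)))
    ∨ (S.O (c.f (i + 1)) (c.f i) ∧ S.O (c.f (i + 1)) (c.f (i + 2))) := by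
  rcases S.oneDir (c.adj i) with ⟨h, -⟩ | ⟨h, hn⟩
  · exact Or.inl ⟨h, (c.alt i).1 h⟩
  · right
    refine ⟨h, ?_⟩
    rcases S.oneDir (S.adj_two c i) with ⟨h', -⟩ | ⟨h', -⟩
    · exact h'
    · exact absurd ((c.alt i).2 h') hn

/-- The in- (resp. out-) neighbours of a vertex of an alternating cycle on that cycle. -/
lemma cyc_pair (c : AltCycle S.Γ S.O (2 * S.r)) (i : ZMod (2 * S.r)) :
    ({c.f i, c.f (i + 2)} : Set V) = S.inSet (c.f (i + 1))
    ∨ ({c.f i, c.f (i + 2)} : Set V) = S.outSet (c.f (i + 1)) := by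
  haveI := S.finite
  have hne : c.f i ≠ c.f (i + 2) := fun hc => by
    have : i = i + 2 := c.inj hc
    exact S.two_ne_zero' (by linear_combination -this)
  have hp2 : ({c.f i, c.f (i + 2)} : Set V).ncard = 2 := Set.ncard_pair hne
  rcases S.cyc_dir c i with ⟨h1, h2⟩ | ⟨h1, h2⟩
  · left
    apply Set.eq_of_subset_of_ncard_le
    · rintro x (rfl | rfl)
      exacts [h1, h2]
    · rw [S.indeg_two, hp2]
    · exact Set.toFinite _
  · right
    apply Set.eq_of_subset_of_ncard_le
    · rintro x (rfl | rfl)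
      exacts [h1, h2]
    · rw [S.outdeg_two, hp2]
    · exact Set.toFinite _

/-- Two alternating cycles through a common edge have the same edge set. -/
lemma edge_unique_sub (c c' : AltCycle S.Γ S.O (2 * S.r)) {e : Sym2 V}
    (he : e ∈ cycEdges c) (he' : e ∈ cycEdges c') : cycEdges c ⊆ cycEdges c' := by
  haveI := S.finite
  haveI := S.nz
  obtain ⟨i0, rfl⟩ := he
  simp only [] at he'
  have key : ∀ k : ℕ, s(c.f (i0 + k), c.f (i0 + k + 1)) ∈ cycEdges c' := by
    intro k
    induction k with
    | zero => simpa using he'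
    | succ k ih =>
      have hgoal : (i0 : ZMod (2 * S.r)) + (k + 1 : ℕ) = (i0 + k) + 1 := by push_cast; ring
      rw [hgoal]
      generalize (i0 + (k : ZMod (2 * S.r))) = i at ih ⊢
      rw [show i + 1 + 1 = i + 2 by ring]
      have hprev : s(c.f i, c.f (i + 1)) ∈ cycEdges c' := ih
      have hxe : c.f (i + 1) ∈ s(c.f i, c.f (i + 1)) := by simp
      have hxv : c.f (i + 1) ∈ cycVerts c' := by
        rw [verts_eq_supp]
        exact ⟨_, hprev, hxe⟩
      obtain ⟨m, hm⟩ := hxv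
      have hpair := S.cyc_pair c i
      have hpair' := S.cyc_pair c' (m - 1)
      rw [show m - 1 + 1 = m by ring, show m - 1 + 2 = m + 1 by ring, hm] at hpair'
      have hshared : c.f i ∈ ({c'.f (m - 1), c'.f (m + 1)} : Set V) := by
        rcases mem_edge_cases c' hprev hxe hm with hca | hca
        · rcases Sym2.eq_iff.1 hca with ⟨h1, -⟩ | ⟨h1, -⟩
          · exact Or.inl h1
          · exact absurd (by linear_combination (-1 : ZMod (2 * S.r)) * (c.inj h1))
              S.one_ne_zero'
        · rcases Sym2.eq_iff.1 hca with ⟨h1, -⟩ | ⟨h2, -⟩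
          · exact absurd (by linear_combination (-1 : ZMod (2 * S.r)) * (c.inj h1))
              S.one_ne_zero'
          · exact Or.inr h2
      have hsame : ({c.f i, c.f (i + 2)} : Set V) = {c'.f (m - 1), c'.f (m + 1)} := by
        rcases hpair with hp | hp <;> rcases hpair' with hp' | hp'
        · rw [hp, hp']
        · exfalso
          have hin : c.f i ∈ S.inSet (c.f (i + 1)) := by rw [← hp]; left; rfl
          have hout : c.f i ∈ S.outSet (c.f (i + 1)) := by rw [← hp']; exact hshared
          exact (S.O_choice (S.O_adj hout)).1 hout hin
        · exfalso
          have hout : c.f i ∈ S.outSet (c.f (i + 1)) := by rw [← hp]; left; rfl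
          have hin : c.f i ∈ S.inSet (c.f (i + 1)) := by rw [← hp']; exact hshared
          exact (S.O_choice (S.O_adj hout)).1 hout hin
        · rw [hp, hp']
      have hxne : c.f (i + 2) ∈ ({c'.f (m - 1), c'.f (m + 1)} : Set V) := by
        rw [← hsame]; right; rfl
      rcases hxne with h2 | h2
      · have := edge_mem c' (m - 1)
        rw [show m - 1 + 1 = m by ring, hm, ← h2, Sym2.eq_swap] at this
        exact this
      · have := edge_mem c' m
        rw [hm, ← h2] at this
        exact this
  rintro e ⟨j, rfl⟩
  have hj : j = i0 + ((j - i0).val : ℕ) := by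
    rw [ZMod.natCast_val, ZMod.cast_id]; ring
  simp only []
  rw [hj]
  exact key (j - i0).val

lemma edge_unique (c c' : AltCycle S.Γ S.O (2 * S.r)) {e : Sym2 V}
    (he : e ∈ cycEdges c) (he' : e ∈ cycEdges c') : cycEdges c = cycEdges c' :=
  Set.Subset.antisymm (S.edge_unique_sub c c' he he') (S.edge_unique_sub c' c he' he)

/-- An automorphism in `G` preserving the edge set of an alternating cycle acts on it as a
rotation or a reflection. -/
lemma dihedral {g : S.Γ ≃g S.Γ} (hg : g ∈ S.G) (c : AltCycle S.Γ S.O (2 * S.r))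
    (hfix : Sym2.map (g : V → V) '' cycEdges c = cycEdges c) :
    (∃ t, ∀ i, g (c.f i) = c.f (i + t)) ∨ (∃ t, ∀ i, g (c.f i) = c.f (t - i)) := by
  haveI := S.finite
  haveI := S.nz
  have hverts : ∀ i, g (c.f i) ∈ cycVerts c := by
    intro i
    have h1 : (g : V → V) '' cycVerts c = cycVerts c := by
      conv_lhs => rw [verts_eq_supp]
      rw [← suppOf_map, hfix, ← verts_eq_supp]
    rw [← h1]
    exact ⟨c.f i, ⟨i, rfl⟩, rfl⟩
  choose π hπ using hverts
  have hπinj : Function.Injective π := by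
    intro i j hij
    have : g (c.f i) = g (c.f j) := by rw [← hπ, ← hπ, hij]
    exact c.inj (g.injective this)
  have hstep : ∀ i, π (i + 1) = π i + 1 ∨ π (i + 1) = π i - 1 := by
    intro i
    have hmem : s(c.f (π i), c.f (π (i + 1))) ∈ cycEdges c := by
      rw [hπ, hπ, ← hfix]
      exact ⟨s(c.f i, c.f (i + 1)), edge_mem c i, by simp [Sym2.map_pair_eq]⟩
    have hx : c.f (π i) ∈ s(c.f (π i), c.f (π (i + 1))) := by simp
    rcases mem_edge_cases c hmem hx rfl with hca | hca
    · rcases Sym2.eq_iff.1 hca with ⟨h1, -⟩ | ⟨-, h2⟩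
      · exact absurd (by linear_combination (c.inj h1)) S.one_ne_zero'
      · exact Or.inr (c.inj h2)
    · rcases Sym2.eq_iff.1 hca with ⟨-, h2⟩ | ⟨h1, -⟩
      · exact Or.inl (c.inj h2)
      · exact absurd (by linear_combination (-1 : ZMod (2 * S.r)) * (c.inj h1)) S.one_ne_zero'
  have hprop : ∀ i, π (i + 1) = π i + 1 → π (i + 1 + 1) = π (i + 1) + 1 := by
    intro i hi
    rcases hstep (i + 1) with hcase | hcase
    · exact hcase
    · exfalso
      have heq : π (i + 1 + 1) = π i := by rw [hcase, hi]; ring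
      exact S.two_ne_zero' (by linear_combination hπinj heq)
  have hprop' : ∀ i, π (i + 1) = π i - 1 → π (i + 1 + 1) = π (i + 1) - 1 := by
    intro i hi
    rcases hstep (i + 1) with hcase | hcase
    · exfalso
      have heq : π (i + 1 + 1) = π i := by rw [hcase, hi]; ring
      exact S.two_ne_zero' (by linear_combination hπinj heq)
    · exact hcase
  rcases hstep 0 with h0 | h0
  · left
    refine ⟨π 0, ?_⟩
    have hB : ∀ k : ℕ, π ((k : ZMod (2 * S.r)) + 1) = π (k : ZMod (2 * S.r)) + 1 := by
      intro k
      induction k with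
      | zero => simpa using h0
      | succ k ih =>
        have := hprop (k : ZMod (2 * S.r)) ih
        have hc : ((k + 1 : ℕ) : ZMod (2 * S.r)) = (k : ZMod (2 * S.r)) + 1 := by push_cast; ring
        rw [hc]
        exact this
    have hA : ∀ k : ℕ, π (k : ZMod (2 * S.r)) = (k : ZMod (2 * S.r)) + π 0 := by
      intro k
      induction k with
      | zero => simp
      | succ k ih =>
        have hc : ((k + 1 : ℕ) : ZMod (2 * S.r)) = (k : ZMod (2 * S.r)) + 1 := by push_cast; ring
        rw [hc, hB k, ih]
        ring
    refine zmod_nat_ind _ (fun k => ?_)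
    rw [← hπ, hA k]
  · right
    refine ⟨π 0, ?_⟩
    have hB : ∀ k : ℕ, π ((k : ZMod (2 * S.r)) + 1) = π (k : ZMod (2 * S.r)) - 1 := by
      intro k
      induction k with
      | zero => simpa using h0
      | succ k ih =>
        have := hprop' (k : ZMod (2 * S.r)) ih
        have hc : ((k + 1 : ℕ) : ZMod (2 * S.r)) = (k : ZMod (2 * S.r)) + 1 := by push_cast; ring
        rw [hc]
        exact this
    have hA : ∀ k : ℕ, π (k : ZMod (2 * S.r)) = π 0 - (k : ZMod (2 * S.r)) := by
      intro k
      induction k with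
      | zero => simp
      | succ k ih =>
        have hc : ((k + 1 : ℕ) : ZMod (2 * S.r)) = (k : ZMod (2 * S.r)) + 1 := by push_cast; ring
        rw [hc, hB k, ih]
        ring
    refine zmod_nat_ind _ (fun k => ?_)
    rw [← hπ, hA k]

/-- There is an element of `G` rotating a given alternating cycle by two steps. -/
lemma exists_rho (c : AltCycle S.Γ S.O (2 * S.r)) :
    ∃ ρ : S.Γ ≃g S.Γ, ρ ∈ S.G ∧ ∀ i, ρ (c.f i) = c.f (i + 2) := by
  haveI := S.finite
  haveI := S.nz
  have heps2 : ∀ i, S.O (c.f i) (c.f (i + 1)) ↔ S.O (c.f (i + 2)) (c.f (i + 2 + 1)) := by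
    intro i
    have h1 := S.eps_succ c i
    have h2 := S.eps_succ c (i + 1)
    rw [show i + 1 + 1 = i + 2 by ring] at h1 h2
    rw [show i + 2 + 1 = i + 1 + 1 + 1 by ring] at h2
    rw [show i + 2 + 1 = i + 1 + 1 + 1 by ring]
    tauto
  have e01 : (0 : ZMod (2 * S.r)) + 1 = 1 := by ring
  have e02 : (0 : ZMod (2 * S.r)) + 2 = 2 := by ring
  have e21 : (2 : ZMod (2 * S.r)) + 1 = 3 := by ring
  have e021 : (0 : ZMod (2 * S.r)) + 2 + 1 = 3 := by ring
  obtain ⟨ρ, hρG, hρ0, hρ1⟩ :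
      ∃ ρ : S.Γ ≃g S.Γ, ρ ∈ S.G ∧ ρ (c.f 0) = c.f 2 ∧ ρ (c.f 1) = c.f 3 := by
    rcases S.oneDir (c.adj 0) with ⟨hO, -⟩ | ⟨hO, -⟩
    · have hO1 : S.O (c.f 0) (c.f 1) := by rwa [e01] at hO
      have hO2 : S.O (c.f 2) (c.f 3) := by
        have := (heps2 0).1 hO
        rwa [e02, e21] at this
      obtain ⟨ρ, hρG, h1, h2⟩ := S.O_orbit hO1 hO2
      exact ⟨ρ, hρG, h1, h2⟩
    · have hO1 : S.O (c.f 1) (c.f 0) := by rwa [e01] at hO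
      have heps0 : ¬ S.O (c.f 0) (c.f (0 + 1)) := fun he => (S.O_choice (c.adj 0)).1 he hO
      have heps2' : ¬ S.O (c.f 2) (c.f (2 + 1)) := by
        intro he
        apply heps0
        apply (heps2 0).2
        rw [e02, e21]
        rwa [e21] at he
      have hO2 : S.O (c.f 3) (c.f 2) := by
        rcases S.oneDir (c.adj 2) with ⟨hx, -⟩ | ⟨hx, -⟩
        · exact absurd hx heps2'
        · rwa [e21] at hx
      obtain ⟨ρ, hρG, h1, h2⟩ := S.O_orbit hO1 hO2
      exact ⟨ρ, hρG, h2, h1⟩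
  have hedge : s(c.f 2, c.f 3) ∈ cycEdges (S.gcyc hρG c) := by
    have := edge_mem (S.gcyc hρG c) 0
    simp only [gcyc] at this
    rw [show (0 : ZMod (2 * S.r)) + 1 = 1 by ring] at this
    rwa [hρ0, hρ1] at this
  have hedge' : s(c.f 2, c.f 3) ∈ cycEdges c := by
    have := edge_mem c 2
    rwa [show (2 : ZMod (2 * S.r)) + 1 = 3 by ring] at this
  have hfix : Sym2.map (ρ : V → V) '' cycEdges c = cycEdges c := by
    rw [← S.gcyc_edges hρG c]
    exact S.edge_unique _ c hedge hedge'
  rcases S.dihedral hρG c hfix with ⟨t, ht⟩ | ⟨t, ht⟩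
  · have h2 : c.f 2 = c.f (0 + t) := by rw [← ht 0, hρ0]
    have ht2 : (2 : ZMod (2 * S.r)) = t := by
      have := c.inj h2
      linear_combination this
    refine ⟨ρ, hρG, fun i => ?_⟩
    rw [ht i, ← ht2]
  · exfalso
    have h2 : c.f 2 = c.f (t - 0) := by rw [← ht 0, hρ0]
    have ht2 : t = (2 : ZMod (2 * S.r)) := by
      have := c.inj h2
      linear_combination -this
    have h3 : c.f 3 = c.f (t - 1) := by rw [← ht 1, hρ1]
    have := c.inj h3
    rw [ht2] at this
    exact S.two_ne_zero' (by linear_combination this)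

lemma mem_altKernel {g : S.Γ ≃g S.Γ} : g ∈ S.altKernel ↔ g ∈ S.G ∧ ∀ E : Set (Sym2 V),
    IsAltEdgeSet S.Γ S.O (2 * S.r) E → Sym2.map (g : V → V) '' E = E := Iff.rfl

lemma mem_attKernel {g : S.Γ ≃g S.Γ} : g ∈ S.attKernel ↔ g ∈ S.G ∧ ∀ A : Set V,
    IsAttSet S.Γ S.O (2 * S.r) A → (g : V → V) '' A = A := Iff.rfl

lemma mem_quotKernel {g : S.Γ ≃g S.Γ} {s : ℕ} : g ∈ S.quotKernel s ↔ g ∈ S.G ∧ ∀ A : Set V,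
    A ∈ S.Blocks s → (g : V → V) '' A = A := Iff.rfl

/-- There is a second alternating cycle through every vertex of an alternating cycle. -/
lemma exists_other (c : AltCycle S.Γ S.O (2 * S.r)) (i : ZMod (2 * S.r)) :
    ∃ c' : AltCycle S.Γ S.O (2 * S.r), cycEdges c' ≠ cycEdges c ∧ c.f i ∈ cycVerts c' := by
  haveI := S.finite
  obtain ⟨E1, E2, hne, hset⟩ := Set.ncard_eq_two.1 (S.coverSet_ncard (c.f i))
  have hcmem : cycEdges c ∈ S.coverSet (c.f i) :=
    ⟨⟨c, rfl⟩, by rw [← verts_eq_supp]; exact ⟨i, rfl⟩⟩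
  have hex : ∃ E ∈ S.coverSet (c.f i), E ≠ cycEdges c := by
    rw [hset] at hcmem
    simp only [Set.mem_insert_iff, Set.mem_singleton_iff] at hcmem
    rcases hcmem with hc1 | hc2
    · refine ⟨E2, by rw [hset]; simp, by rw [hc1]; exact hne.symm⟩
    · refine ⟨E1, by rw [hset]; simp, by rw [hc2]; exact hne⟩
  obtain ⟨E, ⟨⟨c', hc'⟩, hsupp⟩, hEne⟩ := hex
  exact ⟨c', by rw [hc']; exact hEne, by rw [verts_eq_supp, hc']; exact hsupp⟩

/-- There are exactly two alternating cycles through a vertex. -/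
lemma two_cycles {v : V} {E1 E2 E3 : Set (Sym2 V)} (h1 : E1 ∈ S.coverSet v)
    (h2 : E2 ∈ S.coverSet v) (h3 : E3 ∈ S.coverSet v) (h12 : E1 ≠ E2) : E3 = E1 ∨ E3 = E2 := by
  haveI := S.finite
  obtain ⟨A, B, hAB, hset⟩ := Set.ncard_eq_two.1 (S.coverSet_ncard v)
  rw [hset] at h1 h2 h3
  simp only [Set.mem_insert_iff, Set.mem_singleton_iff] at h1 h2 h3
  rcases h1 with rfl | rfl <;> rcases h2 with rfl | rfl <;> rcases h3 with rfl | rfl <;> tauto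

/-- `Q` is the set of positions (along `c`) of the intersection of `c` with the second
alternating cycle through the vertex at position `i` of `c`. -/
def IsPart (c : AltCycle S.Γ S.O (2 * S.r)) (i : ZMod (2 * S.r))
    (Q : Set (ZMod (2 * S.r))) : Prop :=
  ∃ c' : AltCycle S.Γ S.O (2 * S.r), cycEdges c' ≠ cycEdges c ∧ c.f i ∈ cycVerts c' ∧
    Q = {j | c.f j ∈ cycVerts c'}

lemma part_exists (c : AltCycle S.Γ S.O (2 * S.r)) (i : ZMod (2 * S.r)) :
    ∃ Q, S.IsPart c i Q ∧ i ∈ Q := by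
  obtain ⟨c', h1, h2⟩ := S.exists_other c i
  exact ⟨_, ⟨c', h1, h2, rfl⟩, h2⟩

lemma part_mem {c : AltCycle S.Γ S.O (2 * S.r)} {i Q} (hQ : S.IsPart c i Q) : i ∈ Q := by
  obtain ⟨c', -, hmem, rfl⟩ := hQ
  exact hmem

lemma part_ncard {c : AltCycle S.Γ S.O (2 * S.r)} {i Q} (hQ : S.IsPart c i Q) :
    Q.ncard = S.att := by
  haveI := S.finite
  obtain ⟨c', hne, hmem, rfl⟩ := hQ
  have himg : c.f '' {j | c.f j ∈ cycVerts c'} = cycVerts c ∩ cycVerts c' := by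
    ext v
    constructor
    · rintro ⟨j, hj, rfl⟩
      exact ⟨⟨j, rfl⟩, hj⟩
    · rintro ⟨⟨j, rfl⟩, hv⟩
      exact ⟨j, hv, rfl⟩
  have hatt : (cycVerts c ∩ cycVerts c').ncard = S.att :=
    S.att_eq _ ⟨c, c', hne.symm, ⟨c.f i, ⟨i, rfl⟩, hmem⟩, rfl⟩
  rw [← hatt, ← himg, Set.ncard_image_of_injective _ c.inj]

/-- Rotating by two steps maps parts to parts. -/
lemma part_shift {c : AltCycle S.Γ S.O (2 * S.r)} {i Q} (hQ : S.IsPart c i Q) :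
    S.IsPart c (i + 2) ((· + 2) '' Q) := by
  haveI := S.finite
  haveI := S.nz
  obtain ⟨ρ, hρG, hρ⟩ := S.exists_rho c
  obtain ⟨c', hne, hmem, rfl⟩ := hQ
  have hfixc : Sym2.map (ρ : V → V) '' cycEdges c = cycEdges c := by
    apply Set.eq_of_subset_of_ncard_le ?_ ?_ (Set.toFinite _)
    · rintro e ⟨e', ⟨j, rfl⟩, rfl⟩
      refine ⟨j + 2, ?_⟩
      simp only [Sym2.map_pair_eq]
      rw [hρ j, hρ (j + 1), show j + 1 + 2 = j + 2 + 1 by ring]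
    · rw [Set.ncard_image_of_injective _ (Sym2.map.injective ρ.injective)]
  refine ⟨S.gcyc hρG c', ?_, ?_, ?_⟩
  · rw [S.gcyc_edges]
    intro hEq
    apply hne
    apply Set.image_injective.2 (Sym2.map.injective ρ.injective)
    rw [hEq, hfixc]
  · rw [S.gcyc_verts]
    exact ⟨c.f i, hmem, hρ i⟩
  · ext j
    constructor
    · rintro ⟨p, hp, rfl⟩
      show c.f (p + 2) ∈ cycVerts (S.gcyc hρG c')
      rw [S.gcyc_verts]
      exact ⟨c.f p, hp, hρ p⟩
    · intro hj
      have hj' : c.f j ∈ cycVerts (S.gcyc hρG c') := hj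
      rw [S.gcyc_verts] at hj'
      obtain ⟨w, hw, hwj⟩ := hj'
      refine ⟨j - 2, ?_, by exact sub_add_cancel j 2⟩
      have hwf : w = c.f (j - 2) := by
        apply ρ.injective
        rw [hwj, hρ (j - 2), sub_add_cancel]
      show c.f (j - 2) ∈ cycVerts c'
      rw [← hwf]
      exact hw

/-- An element of the kernel `altKernel` fixes every part setwise (through its action `π`
on the positions of the cycle). -/
lemma part_fix {g : S.Γ ≃g S.Γ} (hker : g ∈ S.altKernel) {c : AltCycle S.Γ S.O (2 * S.r)}
    {i Q} (hQ : S.IsPart c i Q) {π : ZMod (2 * S.r) → ZMod (2 * S.r)}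
    (hπ : ∀ j, g (c.f j) = c.f (π j)) (hπinj : Function.Injective π) : π '' Q = Q := by
  haveI := S.finite
  haveI := S.nz
  obtain ⟨c', hne, hmem, rfl⟩ := hQ
  have hfix' : Sym2.map (g : V → V) '' cycEdges c' = cycEdges c' :=
    (S.mem_altKernel.1 hker).2 _ ⟨c', rfl⟩
  have hverts' : (g : V → V) '' cycVerts c' = cycVerts c' := by
    conv_lhs => rw [verts_eq_supp]
    rw [← suppOf_map, hfix', ← verts_eq_supp]
  apply Set.eq_of_subset_of_ncard_le ?_ ?_ (Set.toFinite _)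
  · rintro j ⟨p, hp, rfl⟩
    show c.f (π p) ∈ cycVerts c'
    rw [← hπ p, ← hverts']
    exact ⟨c.f p, hp, rfl⟩
  · rw [Set.ncard_image_of_injective _ hπinj]


/-- Orientation alternates with parity along the cycle. -/
lemma eps_add (c : AltCycle S.Γ S.O (2 * S.r)) : ∀ k : ℕ, ∀ i : ZMod (2 * S.r),
    (Even k → (S.O (c.f (i + k)) (c.f (i + k + 1)) ↔ S.O (c.f i) (c.f (i + 1)))) ∧
    (¬ Even k → (S.O (c.f (i + k)) (c.f (i + k + 1)) ↔ ¬ S.O (c.f i) (c.f (i + 1)))) := by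
  intro k
  induction k with
  | zero =>
    intro i
    refine ⟨fun _ => by simp, fun hne => absurd Even.zero hne⟩
  | succ k ih =>
    intro i
    have hstep := S.eps_succ c (i + k)
    have hc : (i : ZMod (2 * S.r)) + ((k + 1 : ℕ) : ZMod (2 * S.r)) = i + k + 1 := by
      push_cast; ring
    rw [hc]
    obtain ⟨ih1, ih2⟩ := ih i
    constructor
    · intro hev
      have hko : ¬ Even k := by
        rcases Nat.even_add_one.1 hev with h
        exact h
      rw [hstep]
      rw [ih2 hko]
      tauto
    · intro hod
      have hke : Even k := by
        by_contra hko
        exact hod (Nat.even_add_one.2 hko)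
      rw [hstep, ih1 hke]

/-- A rotation in `G` of an alternating cycle is by an even amount. -/
lemma rot_val_even {g : S.Γ ≃g S.Γ} (hg : g ∈ S.G) (c : AltCycle S.Γ S.O (2 * S.r))
    {t : ZMod (2 * S.r)} (hrot : ∀ i, g (c.f i) = c.f (i + t)) : Even t.val := by
  haveI := S.finite
  haveI := S.nz
  by_contra hodd
  have hOmap : S.O (c.f 0) (c.f (0 + 1)) ↔ S.O (c.f (0 + t)) (c.f (0 + t + 1)) := by
    rw [S.O_iff hg (c.adj 0), hrot 0, hrot (0 + 1)]
    rw [show (0 : ZMod (2 * S.r)) + 1 + t = 0 + t + 1 by ring]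
  have htc : (0 : ZMod (2 * S.r)) + t = 0 + (t.val : ℕ) := by
    rw [ZMod.natCast_val, ZMod.cast_id]
  rw [htc] at hOmap
  have := ((S.eps_add c t.val 0).2 hodd)
  rw [this] at hOmap
  by_cases hO : S.O (c.f 0) (c.f (0 + 1)) <;> tauto

/-- A reflection in `G` of an alternating cycle is about an even offset. -/
lemma refl_val_even {g : S.Γ ≃g S.Γ} (hg : g ∈ S.G) (c : AltCycle S.Γ S.O (2 * S.r))
    {t : ZMod (2 * S.r)} (hrefl : ∀ i, g (c.f i) = c.f (t - i)) : Even t.val := by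
  haveI := S.finite
  haveI := S.nz
  haveI : Fact (1 < 2 * S.r) := ⟨by have := S.four_le; omega⟩
  have hOmap : S.O (c.f 0) (c.f (0 + 1)) ↔ S.O (c.f t) (c.f (t - 1)) := by
    rw [S.O_iff hg (c.adj 0), hrefl 0, hrefl (0 + 1)]
    have h1 : t - 0 = t := by ring
    have h2 : t - (0 + 1) = t - 1 := by ring
    rw [h1, h2]
  -- `O (c.f t) (c.f (t - 1))` is the reverse of the edge at position `t - 1`
  have hrev : S.O (c.f t) (c.f (t - 1)) ↔ ¬ S.O (c.f (t - 1)) (c.f (t - 1 + 1)) := by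
    rw [show t - 1 + 1 = t by ring]
    constructor
    · intro hO hO'
      exact (S.O_choice (S.O_adj hO')).1 hO' hO
    · intro hn
      rcases S.oneDir (c.adj (t - 1)) with ⟨hO, -⟩ | ⟨hO, -⟩
      · rw [show t - 1 + 1 = t by ring] at hO
        exact absurd hO hn
      · rwa [show t - 1 + 1 = t by ring] at hO
  have ht1 : t - 1 = 0 + ((t - 1).val : ℕ) := by
    rw [ZMod.natCast_val, ZMod.cast_id]; ring
  by_cases hpar : Even (t - 1).val
  · -- impossible: gives `eps 0 ↔ ¬ eps 0`
    exfalso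
    have he := (S.eps_add c (t - 1).val 0).1 hpar
    rw [← ht1, show t - 1 + 1 = t by ring] at he
    -- he : O (c.f (t-1)) (c.f t) ↔ O (c.f 0) (c.f (0+1))
    have : S.O (c.f (t - 1)) (c.f t) ↔ ¬ S.O (c.f (t - 1)) (c.f t) := by
      constructor
      · intro hO
        have h0 : S.O (c.f 0) (c.f (0 + 1)) := he.1 hO
        have := hOmap.1 h0
        intro hO'
        exact (S.O_choice (S.O_adj hO')).1 hO' this
      · intro hn
        rcases S.oneDir (c.adj (t - 1)) with ⟨hO, -⟩ | ⟨hO, -⟩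
        · rwa [show t - 1 + 1 = t by ring] at hO
        · rw [show t - 1 + 1 = t by ring] at hO
          -- hO : O (c.f t) (c.f (t-1)), so eps 0 holds by hOmap, so eps(t-1) holds, contra hn
          have h0 : S.O (c.f 0) (c.f (0 + 1)) := hOmap.2 hO
          exact absurd (he.2 h0) hn
    by_cases hO : S.O (c.f (t - 1)) (c.f t) <;> tauto
  · -- `(t-1).val` odd, hence `t.val` even
    have hadd : t = (t - 1) + 1 := by ring
    have hval : t.val = ((t - 1).val + (1 : ZMod (2 * S.r)).val) % (2 * S.r) := by
      conv_lhs => rw [hadd]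
      exact ZMod.val_add (t - 1) 1
    rw [ZMod.val_one] at hval
    have heven2 : (2 : ℕ) ∣ 2 * S.r := ⟨S.r, rfl⟩
    have : t.val % 2 = ((t - 1).val + 1) % 2 := by
      rw [hval, Nat.mod_mod_of_dvd _ heven2]
    rcases Nat.even_or_odd ((t - 1).val) with hev | hod
    · exact absurd hev hpar
    · obtain ⟨kk, hkk⟩ := hod
      have hfin : t.val % 2 = 0 := by omega
      exact Nat.even_iff.2 hfin


/-- A rotation induced by an element of the kernel is by a multiple of `2s`. -/
lemma rot_multiple (h : S.att < 2 * S.r) {l s : ℕ} (hl : S.att * l = 2 * S.r)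
    (hs : s = if Even l then l / 2 else l) {g : S.Γ ≃g S.Γ} (hker : g ∈ S.altKernel)
    (c : AltCycle S.Γ S.O (2 * S.r)) {t : ZMod (2 * S.r)}
    (hrot : ∀ i, g (c.f i) = c.f (i + t)) : ∃ mm : ℕ, t = ((2 * s * mm : ℕ) : ZMod (2 * S.r)) := by
  haveI := S.finite
  haveI := S.nz
  have hr4 := S.four_le
  have hattpos := S.att_pos
  -- the additive order of `t` divides the attachment number
  obtain ⟨Q, hQ, -⟩ := S.part_exists c 0
  have hfixQ : (· + t) '' Q = Q := by
    have := S.part_fix hker hQ (π := (· + t)) (fun j => hrot j) (fun a b hab => by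
      simpa using hab)
    exact this
  have hdvd : addOrderOf t ∣ S.att := by
    have := add_invariant_ncard_dvd hfixQ
    rwa [S.part_ncard hQ] at this
  -- hence `l` divides `t.val`
  have htcast : t = ((t.val : ℕ) : ZMod (2 * S.r)) := by
    rw [ZMod.natCast_val, ZMod.cast_id]
  have hord : addOrderOf t = (2 * S.r) / Nat.gcd (2 * S.r) t.val := by
    conv_lhs => rw [htcast]
    exact ZMod.addOrderOf_coe t.val (by omega)
  have hgcd_dvd : Nat.gcd (2 * S.r) t.val ∣ 2 * S.r := Nat.gcd_dvd_left _ _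
  have hordpos : 0 < addOrderOf t := addOrderOf_pos t
  have hmul : addOrderOf t * Nat.gcd (2 * S.r) t.val = 2 * S.r := by
    rw [hord]
    exact Nat.div_mul_cancel hgcd_dvd
  obtain ⟨k, hk⟩ := hdvd
  have hgl : Nat.gcd (2 * S.r) t.val = k * l := by
    have h2 : addOrderOf t * Nat.gcd (2 * S.r) t.val = addOrderOf t * (k * l) := by
      rw [hmul]
      calc 2 * S.r = S.att * l := hl.symm
        _ = addOrderOf t * (k * l) := by rw [hk]; ring
    exact Nat.eq_of_mul_eq_mul_left hordpos h2
  have hldvd : l ∣ t.val := by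
    have h1 : l ∣ Nat.gcd (2 * S.r) t.val := ⟨k, by rw [hgl]; ring⟩
    exact h1.trans (Nat.gcd_dvd_right _ _)
  -- and `2 * s` divides `t.val`
  have h2s : 2 * s ∣ t.val := by
    by_cases hev : Even l
    · obtain ⟨u, hu⟩ := hev
      have hsl : 2 * s = l := by rw [hs, if_pos ⟨u, hu⟩]; omega
      rwa [hsl]
    · have hsl : s = l := by rw [hs, if_neg hev]
      have heven := S.rot_val_even (S.mem_altKernel.1 hker).1 c hrot
      obtain ⟨a, ha⟩ := hldvd
      have haev : Even a := by
        rcases (Nat.even_mul.1 (by rwa [← ha])) with hx | hx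
        · exact absurd hx hev
        · exact hx
      obtain ⟨a2, ha2⟩ := haev
      exact ⟨a2, by rw [hsl, ha, ha2]; ring⟩
  refine ⟨t.val / (2 * s), ?_⟩
  rw [Nat.mul_div_cancel' h2s]
  exact htcast

lemma blockSet_mem_cast {s : ℕ} (hsatt : 2 * S.r ∣ 2 * s * S.att)
    (c : AltCycle S.Γ S.O (2 * S.r)) (i : ZMod (2 * S.r)) (k : ℕ) :
    c.f (i + ((2 * s * k : ℕ) : ZMod (2 * S.r))) ∈ S.blockSet s c i := by
  refine ⟨k % S.att, Nat.mod_lt _ S.att_pos, ?_⟩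
  have hcast : ((2 * s * k : ℕ) : ZMod (2 * S.r))
      = ((2 * s * (k % S.att) : ℕ) : ZMod (2 * S.r)) := by
    rw [ZMod.natCast_eq_natCast_iff]
    have hk : 2 * s * k = (2 * s * S.att) * (k / S.att) + 2 * s * (k % S.att) := by
      conv_lhs => rw [← Nat.div_add_mod k S.att]
      ring
    rw [hk]
    have h0 : (2 * s * S.att) * (k / S.att) ≡ 0 [MOD 2 * S.r] :=
      (Nat.modEq_zero_iff_dvd).2 (hsatt.mul_right _)
    simpa using h0.add_right (2 * s * (k % S.att))
  rw [hcast]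

lemma satt_dvd (h : S.att < 2 * S.r) {l s : ℕ} (hl : S.att * l = 2 * S.r)
    (hs : s = if Even l then l / 2 else l) : 2 * S.r ∣ 2 * s * S.att := by
  by_cases hev : Even l
  · obtain ⟨u, hu⟩ := hev
    have hsl : 2 * s = l := by rw [hs, if_pos ⟨u, hu⟩]; omega
    exact ⟨1, by rw [← hl, hsl]; ring⟩
  · have hsl : s = l := by rw [hs, if_neg hev]
    exact ⟨2, by rw [← hl, hsl]; ring⟩

/-- No element of the kernel can act as a reflection of an alternating cycle when `ℓ ≥ 3`. -/
lemma no_reflection (h : S.att < 2 * S.r) {l : ℕ} (hl : S.att * l = 2 * S.r) (hl3 : 3 ≤ l)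
    {g : S.Γ ≃g S.Γ} (hker : g ∈ S.altKernel) (c : AltCycle S.Γ S.O (2 * S.r))
    {t : ZMod (2 * S.r)} (hrefl : ∀ i, g (c.f i) = c.f (t - i)) : False := by
  haveI := S.finite
  haveI := S.nz
  have hr4 := S.four_le
  have hattpos := S.att_pos
  have hπinj : Function.Injective (fun j : ZMod (2 * S.r) => t - j) := by
    intro a b hab
    simp only [] at hab
    linear_combination (-1 : ZMod (2 * S.r)) * hab
  have hsym : ∀ i Q, S.IsPart c i Q → (fun j => t - j) '' Q = Q := fun i Q hQ =>
    S.part_fix hker hQ (fun j => hrefl j) hπinj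
  -- every part is invariant under translation by `4`
  have hplus4 : ∀ i Q, S.IsPart c i Q → (· + 4) '' Q = Q := by
    intro i Q hQ
    have hQ2 := S.part_shift hQ
    have hs1 := hsym _ _ hQ
    have hs2 := hsym _ _ hQ2
    apply Set.eq_of_subset_of_ncard_le ?_ ?_ (Set.toFinite _)
    · rintro x ⟨p, hp, rfl⟩
      have h1 : t - (p + 2) ∈ (· + 2) '' Q := by
        rw [← hs2]
        exact ⟨p + 2, ⟨p, hp, rfl⟩, rfl⟩
      obtain ⟨y, hy, hy2⟩ := h1
      simp only [] at hy2
      have h2 : t - y ∈ Q := by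
        rw [← hs1]
        exact ⟨y, hy, rfl⟩
      have h3 : t - y = p + 4 := by linear_combination -hy2
      show p + 4 ∈ Q
      rwa [h3] at h2
    · rw [Set.ncard_image_of_injective _ (add_left_injective (4 : ZMod (2 * S.r)))]
  obtain ⟨Q0, hQ0, h00⟩ := S.part_exists c 0
  have hdvd : (addOrderOf (4 : ZMod (2 * S.r))) ∣ S.att := by
    have := add_invariant_ncard_dvd (hplus4 _ _ hQ0)
    rwa [S.part_ncard hQ0] at this
  have h4cast : (4 : ZMod (2 * S.r)) = ((4 : ℕ) : ZMod (2 * S.r)) := by push_cast; rfl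
  have hord : (addOrderOf (4 : ZMod (2 * S.r))) = (2 * S.r) / Nat.gcd (2 * S.r) 4 := by
    conv_lhs => rw [h4cast]
    exact ZMod.addOrderOf_coe 4 (by omega)
  have hgcd4 : Nat.gcd (2 * S.r) 4 ∣ 4 := Nat.gcd_dvd_right _ _
  have hgcddvd : Nat.gcd (2 * S.r) 4 ∣ 2 * S.r := Nat.gcd_dvd_left _ _
  have hmul : (addOrderOf (4 : ZMod (2 * S.r))) * Nat.gcd (2 * S.r) 4 = 2 * S.r := by
    rw [hord]
    exact Nat.div_mul_cancel hgcddvd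
  have hd4pos : 0 < (addOrderOf (4 : ZMod (2 * S.r))) := addOrderOf_pos _
  obtain ⟨k, hk⟩ := hdvd
  have hk1 : k = 1 := by
    have h1 : 2 * S.r ≤ 4 * (addOrderOf (4 : ZMod (2 * S.r))) := by
      calc 2 * S.r = (addOrderOf (4 : ZMod (2 * S.r))) * Nat.gcd (2 * S.r) 4 := hmul.symm
        _ ≤ (addOrderOf (4 : ZMod (2 * S.r))) * 4 := Nat.mul_le_mul_left _ (Nat.le_of_dvd (by norm_num) hgcd4)
        _ = 4 * (addOrderOf (4 : ZMod (2 * S.r))) := by ring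
    have h2 : 3 * ((addOrderOf (4 : ZMod (2 * S.r))) * k) ≤ 2 * S.r := by
      calc 3 * ((addOrderOf (4 : ZMod (2 * S.r))) * k) = 3 * S.att := by rw [hk]
        _ ≤ l * S.att := Nat.mul_le_mul_right _ hl3
        _ = 2 * S.r := by rw [← hl]; ring
    have hkpos : 0 < k := by
      rcases Nat.eq_zero_or_pos k with h0 | h0
      · rw [h0, mul_zero] at hk
        omega
      · exact h0
    nlinarith
  have hattd4 : S.att = (addOrderOf (4 : ZMod (2 * S.r))) := by rw [hk, hk1, mul_one]
  have hgl : Nat.gcd (2 * S.r) 4 = l := by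
    have heq : (addOrderOf (4 : ZMod (2 * S.r))) * Nat.gcd (2 * S.r) 4 = (addOrderOf (4 : ZMod (2 * S.r))) * l := by
      rw [hmul]
      calc 2 * S.r = S.att * l := hl.symm
        _ = (addOrderOf (4 : ZMod (2 * S.r))) * l := by rw [hattd4]
    exact Nat.eq_of_mul_eq_mul_left hd4pos heq
  have hl4 : l = 4 := by
    have hdl : l ∣ 4 := hgl ▸ hgcd4
    have hle : l ≤ 4 := Nat.le_of_dvd (by norm_num) hdl
    obtain ⟨w, hw⟩ := hdl
    interval_cases l <;> omega
  have h4dvd2r : (4 : ℕ) ∣ 2 * S.r := by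
    have hg4 : Nat.gcd (2 * S.r) 4 = 4 := by rw [hgl, hl4]
    rw [← hg4]
    exact hgcddvd
  have hcoset : ∀ i : ZMod (2 * S.r), ∃ z : ℤ, t - i = i + z • (4 : ZMod (2 * S.r)) := by
    intro i
    obtain ⟨Q, hQ, hiQ⟩ := S.part_exists c i
    have hsubQ : {x : ZMod (2 * S.r) | ∃ z : ℤ, x = i + z • (4 : ZMod (2 * S.r))} ⊆ Q := by
      rintro x ⟨z, rfl⟩
      exact add_invariant_zsmul (hplus4 _ _ hQ) z i hiQ
    have hQcard : Q.ncard = (addOrderOf (4 : ZMod (2 * S.r))) := by rw [S.part_ncard hQ, hattd4]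
    have hset : {x : ZMod (2 * S.r) | ∃ z : ℤ, x = i + z • (4 : ZMod (2 * S.r))}
        = (fun y => i + y) ''
          ((AddSubgroup.zmultiples (4 : ZMod (2 * S.r)) : AddSubgroup (ZMod (2 * S.r))) :
            Set (ZMod (2 * S.r))) := by
      ext x
      constructor
      · rintro ⟨z, rfl⟩
        exact ⟨z • 4, ⟨z, rfl⟩, rfl⟩
      · rintro ⟨y, ⟨z, hz⟩, rfl⟩
        exact ⟨z, by rw [← hz]⟩
    have hccard : {x : ZMod (2 * S.r) | ∃ z : ℤ, x = i + z • (4 : ZMod (2 * S.r))}.ncard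
        = (addOrderOf (4 : ZMod (2 * S.r))) := by
      rw [hset, Set.ncard_image_of_injective _ (add_right_injective i),
        ← Nat.card_coe_set_eq, ← Nat.card_zmultiples (4 : ZMod (2 * S.r))]
      rfl
    have hQeq := Set.eq_of_subset_of_ncard_le hsubQ (by rw [hQcard, hccard])
      (Set.toFinite _)
    have hti : t - i ∈ Q := by
      rw [← hsym _ _ hQ]
      exact ⟨i, hiQ, rfl⟩
    rw [← hQeq] at hti
    exact hti
  obtain ⟨z0, hz0⟩ := hcoset 0
  obtain ⟨z1, hz1⟩ := hcoset 1
  rw [zsmul_eq_mul] at hz0 hz1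
  have hcomb : (2 : ZMod (2 * S.r)) = ((z0 : ZMod (2 * S.r)) - (z1 : ZMod (2 * S.r))) * 4 := by
    linear_combination hz0 - hz1
  have hfin := congrArg (ZMod.castHom h4dvd2r (ZMod 4)) hcomb
  rw [map_mul, map_ofNat, map_sub, map_intCast, map_intCast, map_ofNat] at hfin
  have h40 : (4 : ZMod 4) = 0 := by decide
  rw [h40, mul_zero] at hfin
  exact absurd hfin (by decide)


lemma verts_fix_of_edges_fix {g : S.Γ ≃g S.Γ} (c : AltCycle S.Γ S.O (2 * S.r))
    (hfix : Sym2.map (g : V → V) '' cycEdges c = cycEdges c) :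
    (g : V → V) '' cycVerts c = cycVerts c := by
  conv_lhs => rw [verts_eq_supp]
  rw [← suppOf_map, hfix, ← verts_eq_supp]

/-- The kernel on alternating cycles is contained in the kernel on attachment sets. -/
lemma alt_le_att : S.altKernel ≤ S.attKernel := by
  intro g hker
  obtain ⟨hgG, hE⟩ := S.mem_altKernel.1 hker
  refine S.mem_attKernel.2 ⟨hgG, ?_⟩
  rintro A ⟨c, c', hne, hnonempty, rfl⟩
  have h1 : (g : V → V) '' cycVerts c = cycVerts c :=
    S.verts_fix_of_edges_fix c (hE _ ⟨c, rfl⟩)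
  have h2 : (g : V → V) '' cycVerts c' = cycVerts c' :=
    S.verts_fix_of_edges_fix c' (hE _ ⟨c', rfl⟩)
  rw [Set.image_inter g.injective, h1, h2]

/-- An element of `G` mapping the vertex set of each alternating cycle into itself lies in
the kernel on alternating cycles.  Uses `att < 2r`. -/
lemma mem_altKernel_of_verts (h : S.att < 2 * S.r) {g : S.Γ ≃g S.Γ} (hgG : g ∈ S.G)
    (hsub : ∀ c : AltCycle S.Γ S.O (2 * S.r), (g : V → V) '' cycVerts c ⊆ cycVerts c) :
    g ∈ S.altKernel := by
  haveI := S.finite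
  refine S.mem_altKernel.2 ⟨hgG, ?_⟩
  rintro E ⟨c, rfl⟩
  have hv : (g : V → V) '' cycVerts c = cycVerts c :=
    Set.eq_of_subset_of_ncard_le (hsub c)
      (by rw [Set.ncard_image_of_injective _ g.injective]) (Set.toFinite _)
  by_contra hne'
  have hAtt : IsAttSet S.Γ S.O (2 * S.r) (cycVerts c) := by
    refine ⟨S.gcyc hgG c, c, ?_, ?_, ?_⟩
    · rw [S.gcyc_edges]
      exact hne'
    · refine ⟨c.f 0, ?_, ⟨0, rfl⟩⟩
      rw [S.gcyc_verts, hv]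
      exact ⟨0, rfl⟩
    · rw [S.gcyc_verts, hv, Set.inter_self]
  have := S.att_eq _ hAtt
  rw [S.ncard_verts] at this
  omega

/-- The kernel on attachment sets is contained in the kernel on alternating cycles. -/
lemma att_le_alt (h : S.att < 2 * S.r) : S.attKernel ≤ S.altKernel := by
  intro g hker
  obtain ⟨hgG, hA⟩ := S.mem_attKernel.1 hker
  apply S.mem_altKernel_of_verts h hgG
  intro c
  rintro v ⟨w, ⟨i, rfl⟩, rfl⟩
  obtain ⟨c', hne, hmem⟩ := S.exists_other c i
  have hAi : IsAttSet S.Γ S.O (2 * S.r) (cycVerts c ∩ cycVerts c') :=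
    ⟨c, c', hne.symm, ⟨c.f i, ⟨i, rfl⟩, hmem⟩, rfl⟩
  have hfixA := hA _ hAi
  have hmem2 : g (c.f i) ∈ cycVerts c ∩ cycVerts c' := by
    rw [← hfixA]
    exact ⟨c.f i, ⟨⟨i, rfl⟩, hmem⟩, rfl⟩
  exact hmem2.1

/-- The kernel on the block system is contained in the kernel on alternating cycles. -/
lemma quot_le_alt (h : S.att < 2 * S.r) (s : ℕ) : S.quotKernel s ≤ S.altKernel := by
  intro g hker
  obtain ⟨hgG, hB⟩ := S.mem_quotKernel.1 hker
  apply S.mem_altKernel_of_verts h hgG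
  intro c
  rintro v ⟨w, ⟨i, rfl⟩, rfl⟩
  have hmem : c.f i ∈ S.blockSet s c i := ⟨0, S.att_pos, by simp⟩
  have hfixB := hB _ ⟨c, i, rfl⟩
  have hmem2 : g (c.f i) ∈ S.blockSet s c i := by
    rw [← hfixB]
    exact ⟨c.f i, hmem, rfl⟩
  obtain ⟨j, hj, hjeq⟩ := hmem2
  rw [hjeq]
  exact ⟨_, rfl⟩

/-- The kernel on alternating cycles is contained in the kernel on the block system. -/
lemma alt_le_quot (h : S.att < 2 * S.r) {l s : ℕ} (hl : S.att * l = 2 * S.r)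
    (hs : s = if Even l then l / 2 else l) : S.altKernel ≤ S.quotKernel s := by
  intro g hker
  obtain ⟨hgG, hE⟩ := S.mem_altKernel.1 hker
  haveI := S.finite
  haveI := S.nz
  have hrpos := S.r_pos
  have hattpos := S.att_pos
  refine S.mem_quotKernel.2 ⟨hgG, ?_⟩
  rintro A ⟨c, i, rfl⟩
  have hfix := hE _ ⟨c, rfl⟩
  have hsatt := S.satt_dvd h hl hs
  rcases S.dihedral hgG c hfix with ⟨t, ht⟩ | ⟨t, ht⟩
  · -- rotation case
    obtain ⟨mm, hmm⟩ := S.rot_multiple h hl hs hker c ht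
    apply Set.eq_of_subset_of_ncard_le ?_ ?_ (Set.toFinite _)
    · rintro v ⟨w, ⟨j, hj, rfl⟩, rfl⟩
      show g (c.f (i + ((2 * s * j : ℕ) : ZMod (2 * S.r)))) ∈ S.blockSet s c i
      rw [ht]
      have harg : i + ((2 * s * j : ℕ) : ZMod (2 * S.r)) + t
          = i + ((2 * s * (j + mm) : ℕ) : ZMod (2 * S.r)) := by
        rw [hmm]
        push_cast
        ring
      rw [harg]
      exact S.blockSet_mem_cast hsatt c i (j + mm)
    · rw [Set.ncard_image_of_injective _ g.injective]
  · -- reflection case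
    rcases Nat.lt_or_ge l 3 with hlsmall | hl3
    · -- here `l = 2`, `s = 1`
      have hlne0 : l ≠ 0 := by
        intro h0
        rw [h0, mul_zero] at hl
        omega
      have hlne1 : l ≠ 1 := by
        intro h1
        rw [h1, mul_one] at hl
        omega
      have hl2 : l = 2 := by omega
      have hs1 : s = 1 := by rw [hs, hl2]; norm_num
      subst hs1
      have htval : Even t.val := S.refl_val_even hgG c ht
      apply Set.eq_of_subset_of_ncard_le ?_ ?_ (Set.toFinite _)
      · rintro v ⟨w, ⟨j, hj, rfl⟩, rfl⟩
        show g (c.f (i + ((2 * 1 * j : ℕ) : ZMod (2 * S.r)))) ∈ S.blockSet 1 c i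
        rw [ht]
        set e : ZMod (2 * S.r) := t - i - i - ((2 * 1 * j : ℕ) : ZMod (2 * S.r)) with he
        have h2dvd : (2 : ℕ) ∣ 2 * S.r := ⟨S.r, rfl⟩
        have heval : (2 : ℕ) ∣ e.val := by
          have hval2 : ((e.val : ℕ) : ZMod 2) = ZMod.castHom h2dvd (ZMod 2) e := by
            rw [ZMod.castHom_apply, ZMod.natCast_val]
          rw [← ZMod.natCast_eq_zero_iff, hval2, he]
          rw [map_sub, map_sub, map_sub, map_natCast]
          have ht0 : ZMod.castHom h2dvd (ZMod 2) t = 0 := by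
            rw [ZMod.castHom_apply, ← ZMod.natCast_val, ZMod.natCast_eq_zero_iff]
            exact htval.two_dvd
          have hj0 : ((2 * 1 * j : ℕ) : ZMod 2) = 0 := by
            rw [ZMod.natCast_eq_zero_iff]
            exact ⟨j, by ring⟩
          rw [ht0, hj0]
          have hall : ∀ x : ZMod 2, 0 - x - x - 0 = 0 := by decide
          exact hall _
        obtain ⟨m2, hm2⟩ := heval
        have harg : t - (i + ((2 * 1 * j : ℕ) : ZMod (2 * S.r)))
            = i + ((2 * 1 * m2 : ℕ) : ZMod (2 * S.r)) := by
          have he2 : ((2 * 1 * m2 : ℕ) : ZMod (2 * S.r)) = e := by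
            rw [show 2 * 1 * m2 = 2 * m2 by ring, ← hm2, ZMod.natCast_val, ZMod.cast_id]
          rw [he2, he]
          ring
        rw [harg]
        exact S.blockSet_mem_cast hsatt c i m2
      · rw [Set.ncard_image_of_injective _ g.injective]
    · exact (S.no_reflection h hl hl3 hker c ht).elim


end Setup

end Aux

end HalfArc


open HalfArc

/-- Theorem 5.4 of the paper: if `att_G(Γ) < 2·rad_G(Γ)` then the
kernels of the actions of `G` on the quotient graph `Γ_B`, on the graph of
`G`-alternating cycles, and on the set of all `G`-attachment sets coincide. -/
theorem statement_10 {V : Type*} (S : Setup V) (h : S.att < 2 * S.r) (l s : ℕ)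
    (hl : S.att * l = 2 * S.r) (hs : s = if Even l then l / 2 else l) :
    S.quotKernel s = S.altKernel ∧ S.altKernel = S.attKernel := by
  constructor
  · exact le_antisymm (S.quot_le_alt h s) (S.alt_le_quot h hl hs)
  · exact le_antisymm S.alt_le_att (S.att_le_alt h)
end

section
/- Let Γ be a tetravalent G-half-arc-transitive graph for some G ≤ Aut(Γ), let r = rad_G(Γ), a = att_G(Γ) and q = jum_G(Γ). If a does not divide r and a ≠ |V(Γ)|, then q² ≡ ±1 (mod a), and consequently Q_G(Γ) = {q}, i.e. q_t = q_h = q. -/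
/-! Common definitions for tetravalent half-arc-transitive graph theory. -/

open SimpleGraph Set

namespace HalfArc

variable {V W : Type*}

/-! ### Auxiliary development for statement_14 -/

namespace P14

open SimpleGraph Set

variable {V : Type*}

section Cycles

variable {Γ : SimpleGraph V} {O : V → V → Prop} {n : ℕ}

/-- rotation of an alternating cycle -/
def rotC (c : AltCycle Γ O n) (k : ZMod n) : AltCycle Γ O n where
  f := fun i => c.f (i + k)
  inj := fun i j h => add_right_cancel (c.inj h)
  adj := fun i => by
    show Γ.Adj (c.f (i + k)) (c.f (i + 1 + k))
    have := c.adj (i + k); rwa [add_right_comm] at this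
  alt := fun i => by
    show O (c.f (i + k)) (c.f (i + 1 + k)) ↔ O (c.f (i + 2 + k)) (c.f (i + 1 + k))
    have := c.alt (i + k)
    rwa [show i + k + 1 = i + 1 + k by ring, show i + k + 2 = i + 2 + k by ring] at this

/-- reflection of an alternating cycle -/
def revC (c : AltCycle Γ O n) (k : ZMod n) : AltCycle Γ O n where
  f := fun i => c.f (k - i)
  inj := fun i j h => sub_right_injective (c.inj h : k - i = k - j)
  adj := fun i => by
    show Γ.Adj (c.f (k - i)) (c.f (k - (i + 1)))
    have := (c.adj (k - i - 1)).symm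
    rw [show k - i - 1 + 1 = k - i by ring] at this
    rwa [show k - (i+1) = k - i - 1 by ring]
  alt := fun i => by
    show O (c.f (k - i)) (c.f (k - (i+1))) ↔ O (c.f (k - (i+2))) (c.f (k - (i+1)))
    have := (c.alt (k - i - 2)).symm
    rwa [show k - i - 2 + 1 = k - (i+1) by ring, show k - i - 2 + 2 = k - i by ring,
      show k - i - 2 = k - (i+2) by ring] at this

theorem cycEdges_congr {c d : AltCycle Γ O n} (h : ∀ i, c.f i = d.f i) :
    cycEdges c = cycEdges d := by
  unfold cycEdges
  have he : (fun i => s(c.f i, c.f (i+1))) = (fun i => s(d.f i, d.f (i+1))) := by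
    funext i; rw [h i, h (i+1)]
  rw [he]

theorem cycEdges_rotC (c : AltCycle Γ O n) (k : ZMod n) :
    cycEdges (rotC c k) = cycEdges c := by
  unfold cycEdges rotC
  ext e
  constructor
  · rintro ⟨i, rfl⟩
    exact ⟨i + k, by simp [add_right_comm]⟩
  · rintro ⟨i, rfl⟩
    exact ⟨i - k, by simp [sub_add_cancel, add_right_comm, sub_add_eq_add_sub]⟩

theorem cycEdges_revC (c : AltCycle Γ O n) (k : ZMod n) :
    cycEdges (revC c k) = cycEdges c := by
  unfold cycEdges revC
  ext e
  constructor
  · rintro ⟨i, rfl⟩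
    refine ⟨k - (i + 1), ?_⟩
    show s(c.f (k - (i+1)), c.f (k - (i+1) + 1)) = s(c.f (k - i), c.f (k - (i+1)))
    rw [show k - (i+1) + 1 = k - i by ring, Sym2.eq_swap]
  · rintro ⟨i, rfl⟩
    refine ⟨k - (i + 1), ?_⟩
    show s(c.f (k - (k - (i+1))), c.f (k - (k - (i+1) + 1))) = s(c.f i, c.f (i+1))
    rw [show k - (k - (i+1)) = i + 1 by ring, show k - (k - (i+1) + 1) = i by ring,
      Sym2.eq_swap]

theorem mem_supp (c : AltCycle Γ O n) (i : ZMod n) : c.f i ∈ suppOf (cycEdges c) :=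
  ⟨s(c.f i, c.f (i+1)), ⟨i, rfl⟩, Sym2.mem_mk_left _ _⟩

theorem edge_cases (c : AltCycle Γ O n) {a b : V} (h : s(a, b) ∈ cycEdges c) :
    ∃ i, (a = c.f i ∧ b = c.f (i+1)) ∨ (b = c.f i ∧ a = c.f (i+1)) := by
  obtain ⟨i, hi⟩ := h
  refine ⟨i, ?_⟩
  rw [Sym2.eq_iff] at hi
  rcases hi with ⟨h1, h2⟩ | ⟨h1, h2⟩
  · exact Or.inl ⟨h1.symm, h2.symm⟩
  · exact Or.inr ⟨h1.symm, h2.symm⟩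

end Cycles

section SetupLemmas

variable (S : Setup V)

theorem O_iff {g : S.Γ ≃g S.Γ} (hg : g ∈ S.G) (u v : V) :
    S.O u v ↔ S.O (g u) (g v) := by
  refine ⟨fun h => S.O_inv g hg h, fun h => ?_⟩
  have h2 := S.O_inv g⁻¹ (S.G.inv_mem hg) h
  have e1 : (g⁻¹ : S.Γ ≃g S.Γ) (g u) = u := g.symm_apply_apply u
  have e2 : (g⁻¹ : S.Γ ≃g S.Γ) (g v) = v := g.symm_apply_apply v
  rwa [e1, e2] at h2

/-- image of an alternating cycle under an automorphism in `G` -/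
def gmap {n : ℕ} (g : S.Γ ≃g S.Γ) (hg : g ∈ S.G) (c : AltCycle S.Γ S.O n) :
    AltCycle S.Γ S.O n where
  f := fun i => g (c.f i)
  inj := fun i j h => c.inj (g.injective h)
  adj := fun i => g.map_adj_iff.mpr (c.adj i)
  alt := fun i => by
    rw [← O_iff S hg, ← O_iff S hg]
    exact c.alt i

theorem cycEdges_gmap {n : ℕ} (g : S.Γ ≃g S.Γ) (hg : g ∈ S.G) (c : AltCycle S.Γ S.O n) :
    cycEdges (gmap S g hg c) = Sym2.map g '' cycEdges c := by
  unfold cycEdges gmap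
  rw [← Set.range_comp]
  have he : (Sym2.map (g : V → V) ∘ fun i => s(c.f i, c.f (i+1)))
      = (fun i => s((g (c.f i) : V), (g (c.f (i+1)) : V))) := by
    funext i; simp [Sym2.map_pair_eq]
  rw [← he]

/-- out-neighbourhood and in-neighbourhood -/
def outS (z : V) : Set V := {w | S.O z w}
def inS (z : V) : Set V := {w | S.O w z}

theorem out_in_card (z : V) : (outS S z).ncard = 2 ∧ (inS S z).ncard = 2 := by
  classical
  have : Finite V := S.finite
  cases nonempty_fintype V
  -- images under automorphisms
  have himg : ∀ (g : S.Γ ≃g S.Γ), g ∈ S.G → ∀ u : V,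
      (g : V → V) '' outS S u = outS S (g u) := by
    intro g hg u
    ext w
    constructor
    · rintro ⟨x, hx, rfl⟩
      exact (O_iff S hg u x).mp hx
    · intro hw
      refine ⟨g.symm w, ?_, g.apply_symm_apply w⟩
      have : S.O (g u) (g (g.symm w)) := by
        rwa [g.apply_symm_apply w]
      exact (O_iff S hg u _).mpr this
  have himg' : ∀ (g : S.Γ ≃g S.Γ), g ∈ S.G → ∀ u : V,
      (g : V → V) '' inS S u = inS S (g u) := by
    intro g hg u
    ext w
    constructor
    · rintro ⟨x, hx, rfl⟩
      exact (O_iff S hg x u).mp hx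
    · intro hw
      refine ⟨g.symm w, ?_, g.apply_symm_apply w⟩
      have : S.O (g (g.symm w)) (g u) := by
        rwa [g.apply_symm_apply w]
      exact (O_iff S hg _ u).mpr this
  have hconst : ∀ u v : V, (outS S u).ncard = (outS S v).ncard ∧
      (inS S u).ncard = (inS S v).ncard := by
    intro u v
    obtain ⟨g, hg, rfl⟩ := S.hat.1 u v
    constructor
    · rw [← himg g hg u, Set.ncard_image_of_injective _ g.injective]
    · rw [← himg' g hg u, Set.ncard_image_of_injective _ g.injective]
  -- partition of the neighbour set
  have hpart : ∀ u : V, (outS S u).ncard + (inS S u).ncard = 4 := by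
    intro u
    have hunion : outS S u ∪ inS S u = S.Γ.neighborSet u := by
      ext w
      simp only [Set.mem_union, outS, inS, Set.mem_setOf_eq, mem_neighborSet]
      constructor
      · rintro (h | h)
        · exact S.O_adj h
        · exact (S.O_adj h).symm
      · intro h
        by_cases ho : S.O u w
        · exact Or.inl ho
        · exact Or.inr (((S.O_choice h.symm)).mpr ho)
    have hdisj : Disjoint (outS S u) (inS S u) := by
      rw [Set.disjoint_left]
      intro w hw hw'
      exact ((S.O_choice (S.O_adj hw)).mp hw) hw'
    rw [← S.tetra u, ← hunion, Set.ncard_union_eq hdisj (Set.toFinite _) (Set.toFinite _)]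
  -- double counting
  have hnonempty : Nonempty V := S.conn.nonempty
  obtain ⟨z₀⟩ := hnonempty
  set a := (outS S z₀).ncard with ha
  have hsum : ∀ u : V, (outS S u).ncard = a ∧ (inS S u).ncard = 4 - a := by
    intro u
    have h1 := (hconst u z₀).1
    have h2 := hpart u
    constructor
    · omega
    · omega
  -- total count of oriented pairs, fiberwise over fst and snd
  have count : a * (Finset.univ : Finset V).card = (4 - a) * (Finset.univ : Finset V).card := by
    have key1 : (Finset.univ.filter (fun p : V × V => S.O p.1 p.2)).card
        = ∑ u : V, a := by
      rw [Finset.card_eq_sum_card_fiberwise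
        (f := Prod.fst) (t := Finset.univ) (fun x _ => Finset.mem_univ _)]
      refine Finset.sum_congr rfl (fun u _ => ?_)
      have : ((Finset.univ.filter (fun p : V × V => S.O p.1 p.2)).filter
          (fun p => p.1 = u)).card = (outS S u).ncard := by
        rw [Set.ncard_eq_toFinset_card']
        refine Finset.card_bij (fun p _ => p.2) ?_ ?_ ?_
        · intro p hp
          simp only [Finset.mem_filter, Finset.mem_univ, true_and] at hp
          simp only [Set.mem_toFinset]
          rw [← hp.2]; exact hp.1
        · intro p hp q hq hpq
          simp only [Finset.mem_filter, Finset.mem_univ, true_and] at hp hq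
          exact Prod.ext (hp.2.trans hq.2.symm) hpq
        · intro w hw
          simp only [Set.mem_toFinset] at hw
          refine ⟨(u, w), ?_, rfl⟩
          simp only [Finset.mem_filter, Finset.mem_univ, true_and]
          exact ⟨hw, trivial⟩
      rw [this, (hsum u).1]
    have key2 : (Finset.univ.filter (fun p : V × V => S.O p.1 p.2)).card
        = ∑ u : V, (4 - a) := by
      rw [Finset.card_eq_sum_card_fiberwise
        (f := Prod.snd) (t := Finset.univ) (fun x _ => Finset.mem_univ _)]
      refine Finset.sum_congr rfl (fun u _ => ?_)
      have : ((Finset.univ.filter (fun p : V × V => S.O p.1 p.2)).filter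
          (fun p => p.2 = u)).card = (inS S u).ncard := by
        rw [Set.ncard_eq_toFinset_card']
        refine Finset.card_bij (fun p _ => p.1) ?_ ?_ ?_
        · intro p hp
          simp only [Finset.mem_filter, Finset.mem_univ, true_and] at hp
          simp only [Set.mem_toFinset]
          show S.O p.1 u
          rw [← hp.2]; exact hp.1
        · intro p hp q hq hpq
          simp only [Finset.mem_filter, Finset.mem_univ, true_and] at hp hq
          exact Prod.ext hpq (hp.2.trans hq.2.symm)
        · intro w hw
          simp only [Set.mem_toFinset] at hw
          refine ⟨(w, u), ?_, rfl⟩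
          simp only [Finset.mem_filter, Finset.mem_univ, true_and]
          exact ⟨hw, trivial⟩
      rw [this, (hsum u).2]
    have := key1.symm.trans key2
    simpa [Finset.sum_const, Nat.smul_one_eq_cast, mul_comm] using this
  have hVpos : 0 < (Finset.univ : Finset V).card := Finset.card_pos.mpr ⟨z₀, Finset.mem_univ _⟩
  have ha2 : a = 2 := by
    have h4 := hpart z₀
    have := Nat.eq_of_mul_eq_mul_right hVpos count
    omega
  obtain ⟨h1, h2⟩ := hsum z
  omega

/-- helper: a set with exactly two elements -/
theorem eq_of_two {α : Type*} {s : Set α} (h : s.ncard = 2) {x y w : α}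
    (hx : x ∈ s) (hy : y ∈ s) (hw : w ∈ s) (hxw : x ≠ w) (hyw : y ≠ w) : x = y := by
  obtain ⟨A, B, hAB, rfl⟩ := Set.ncard_eq_two.mp h
  simp only [Set.mem_insert_iff, Set.mem_singleton_iff] at hx hy hw
  rcases hw with rfl | rfl <;> rcases hx with rfl | rfl <;> rcases hy with rfl | rfl <;>
    first | rfl | (exfalso; exact hxw rfl) | (exfalso; exact hyw rfl)

end SetupLemmas


section Rigidity

variable (S : Setup V)

theorem Npos : 0 < 2 * S.r := by have := S.r_pos; omega

theorem r_ge_two : 2 ≤ S.r := by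
  by_contra hcon
  have hr : S.r = 1 := by have := S.r_pos; omega
  -- pick a vertex
  obtain ⟨v⟩ := S.conn.nonempty
  -- three distinct neighbours
  classical
  have : Finite V := S.finite
  cases nonempty_fintype V
  have h4 : (S.Γ.neighborSet v).ncard = 4 := S.tetra v
  have h3 : ∃ w₁ w₂ w₃ : V, w₁ ∈ S.Γ.neighborSet v ∧ w₂ ∈ S.Γ.neighborSet v ∧
      w₃ ∈ S.Γ.neighborSet v ∧ w₁ ≠ w₂ ∧ w₁ ≠ w₃ ∧ w₂ ≠ w₃ := by
    have h2 : 2 < (S.Γ.neighborSet v).ncard := by omega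
    rw [Set.ncard_eq_toFinset_card'] at h2
    obtain ⟨w₁, w₂, w₃, hw₁, hw₂, hw₃, h12, h13, h23⟩ := Finset.two_lt_card_iff.mp h2
    rw [Set.mem_toFinset] at hw₁ hw₂ hw₃
    exact ⟨w₁, w₂, w₃, hw₁, hw₂, hw₃, h12, h13, h23⟩
  obtain ⟨w₁, w₂, w₃, hw₁, hw₂, hw₃, h12, h13, h23⟩ := h3
  rw [mem_neighborSet] at hw₁ hw₂ hw₃
  -- single-edge alternating cycles (length 2 = 2 * r)
  have hedge : ∀ w : V, S.Γ.Adj v w → ∃ c : AltCycle S.Γ S.O 2,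
      cycEdges c = {s(v, w)} := by
    intro w hvw
    have hcases : ∀ i : ZMod 2, i = 0 ∨ i = 1 := by decide
    refine ⟨⟨fun i => if i = 0 then v else w, ?_, ?_, ?_⟩, ?_⟩
    · intro i j hij
      rcases hcases i with rfl | rfl <;> rcases hcases j with rfl | rfl <;>
        simp_all <;> first | rfl | exact absurd hij hvw.ne | exact absurd hij.symm hvw.ne
    · intro i
      rcases hcases i with rfl | rfl
      · simpa using hvw
      · have : (1 + 1 : ZMod 2) = 0 := by decide
        simp only [this]
        simpa using hvw.symm
    · intro i
      have h2 : (i + 2 : ZMod 2) = i := by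
        have : (2 : ZMod 2) = 0 := by decide
        rw [this, add_zero]
      rw [h2]
    · ext e
      simp only [cycEdges, Set.mem_range, Set.mem_singleton_iff]
      constructor
      · rintro ⟨i, rfl⟩
        rcases hcases i with rfl | rfl
        · simp
        · have h0 : (1 + 1 : ZMod 2) = 0 := by decide
          simp only [h0]
          simp [Sym2.eq_swap]
      · rintro rfl
        exact ⟨0, by simp⟩
  obtain ⟨c₁, hc₁⟩ := hedge w₁ hw₁
  obtain ⟨c₂, hc₂⟩ := hedge w₂ hw₂
  obtain ⟨c₃, hc₃⟩ := hedge w₃ hw₃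
  have hvmem : ∀ w : V, v ∈ suppOf {s(v, w)} := by
    intro w
    exact ⟨s(v, w), rfl, Sym2.mem_mk_left _ _⟩
  have hcover := S.alt_cover v
  rw [hr] at hcover
  norm_num at hcover
  have hmem : ∀ w : V, S.Γ.Adj v w → ({s(v, w)} : Set (Sym2 V)) ∈
      {E : Set (Sym2 V) | IsAltEdgeSet S.Γ S.O 2 E ∧ v ∈ suppOf E} := by
    intro w hvw
    obtain ⟨c, hc⟩ := hedge w hvw
    exact ⟨⟨c, hc⟩, hvmem w⟩
  have hdist : ∀ w w' : V, S.Γ.Adj v w → w ≠ w' →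
      ({s(v, w)} : Set (Sym2 V)) ≠ {s(v, w')} := by
    intro w w' hvw hne h
    have h2 : s(v, w) = s(v, w') := by
      have : s(v,w) ∈ ({s(v, w')} : Set (Sym2 V)) := h ▸ rfl
      exact this
    rw [Sym2.eq_iff] at h2
    rcases h2 with ⟨-, h2⟩ | ⟨h2, h3⟩
    · exact hne h2
    · exact hne (h3.trans h2)
  exact hdist w₁ w₂ hw₁ h12
    (eq_of_two hcover (hmem w₁ hw₁) (hmem w₂ hw₂) (hmem w₃ hw₃)
      (hdist w₁ w₃ hw₁ h13) (hdist w₂ w₃ hw₂ h23))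

variable (hr2 : 2 ≤ S.r)
include hr2

theorem two_ne_zero' : (2 : ZMod (2 * S.r)) ≠ 0 := by
  have : ((2 : ℕ) : ZMod (2 * S.r)) ≠ 0 := by
    rw [Ne, ZMod.natCast_eq_zero_iff]
    intro hdvd
    have := Nat.le_of_dvd (by norm_num) hdvd
    omega
  simpa using this

theorem rigid (c d : AltCycle S.Γ S.O (2 * S.r)) (k : ZMod (2 * S.r))
    (h0 : d.f 0 = c.f k) (h1 : d.f 1 = c.f (k + 1)) : ∀ i, d.f i = c.f (k + i) := by
  haveI : NeZero (2 * S.r) := ⟨by have := S.r_pos; omega⟩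
  have key : ∀ m : ℕ, d.f ((m : ℕ) : ZMod (2 * S.r)) = c.f (k + ((m : ℕ) : ZMod (2 * S.r))) ∧
      d.f (((m + 1 : ℕ)) : ZMod (2 * S.r)) = c.f (k + (((m + 1 : ℕ)) : ZMod (2 * S.r))) := by
    intro m
    induction m with
    | zero => exact ⟨by simpa using h0, by simpa using h1⟩
    | succ m ih =>
      obtain ⟨A, B⟩ := ih
      refine ⟨B, ?_⟩
      set i : ZMod (2 * S.r) := ((m : ℕ) : ZMod (2 * S.r)) with hi
      have cast1 : (((m + 1 : ℕ)) : ZMod (2 * S.r)) = i + 1 := by push_cast [hi]; ring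
      have cast2 : (((m + 1 + 1 : ℕ)) : ZMod (2 * S.r)) = i + 2 := by push_cast [hi]; ring
      rw [cast2]
      rw [cast1] at B
      -- main step
      have hne2 : (2 : ZMod (2 * S.r)) ≠ 0 := two_ne_zero' S hr2
      have hxw : d.f (i + 2) ≠ c.f (k + i) := by
        rw [← A]
        intro h
        have hii := d.inj h
        have h2 : (2 : ZMod (2 * S.r)) = 0 := by
          have h3 : i + 2 = i + 0 := by rw [add_zero]; exact hii
          exact add_left_cancel h3
        exact hne2 h2
      have hyw : c.f (k + i + 2) ≠ c.f (k + i) := by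
        intro h
        have h2 := c.inj h
        have : (2 : ZMod (2 * S.r)) = 0 := by
          have h3 : k + i + 2 = k + i + 0 := by rw [add_zero]; exact h2
          exact add_left_cancel h3
        exact hne2 this
      have haltd := d.alt i
      have haltc := c.alt (k + i)
      rw [A, B] at haltd
      rw [show k + i + 1 = k + (i+1) by ring] at haltc
      -- z is the common second vertex
      by_cases hO : S.O (c.f (k + i)) (c.f (k + (i + 1)))
      · have hx : S.O (d.f (i + 2)) (c.f (k + (i+1))) := haltd.mp hO
        have hy : S.O (c.f (k + i + 2)) (c.f (k + (i+1))) := haltc.mp hO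
        have := eq_of_two (out_in_card S (c.f (k + (i+1)))).2 hx hy hO hxw hyw
        rw [this]
        congr 1
        ring
      · have hAdjwz : S.Γ.Adj (c.f (k + i)) (c.f (k + (i+1))) := by
          have := c.adj (k + i)
          rwa [show k + i + 1 = k + (i+1) by ring] at this
        have hO' : S.O (c.f (k + (i+1))) (c.f (k + i)) :=
          (S.O_choice hAdjwz.symm).mpr hO
        have hnx : ¬ S.O (d.f (i + 2)) (c.f (k + (i+1))) := fun h => hO (haltd.mpr h)
        have hny : ¬ S.O (c.f (k + i + 2)) (c.f (k + (i+1))) := fun h => hO (haltc.mpr h)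
        have hAdjzx : S.Γ.Adj (c.f (k + (i+1))) (d.f (i + 2)) := by
          have := d.adj (i + 1)
          rwa [B, show i + 1 + 1 = i + 2 by ring] at this
        have hAdjzy : S.Γ.Adj (c.f (k + (i+1))) (c.f (k + i + 2)) := by
          have := c.adj (k + (i + 1))
          rwa [show k + (i + 1) + 1 = k + i + 2 by ring] at this
        have hx : S.O (c.f (k + (i+1))) (d.f (i + 2)) := (S.O_choice hAdjzx).mpr hnx
        have hy : S.O (c.f (k + (i+1))) (c.f (k + i + 2)) := (S.O_choice hAdjzy).mpr hny
        have := eq_of_two (out_in_card S (c.f (k + (i+1)))).1 hx hy hO' hxw hyw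
        rw [this]
        congr 1
        ring
  intro i
  obtain ⟨m, rfl⟩ := (ZMod.natCast_rightInverse (n := 2 * S.r)).surjective i
  exact (key m).1

/-- aligned or reflected rigidity packaged -/
theorem rigid_refl (c d : AltCycle S.Γ S.O (2 * S.r)) (k : ZMod (2 * S.r))
    (h0 : d.f 0 = c.f k) (h1 : d.f 1 = c.f (k - 1)) : ∀ i, d.f i = c.f (k - i) := by
  have h0' : d.f 0 = (revC c k).f 0 := by
    show d.f 0 = c.f (k - 0)
    simpa using h0
  have h1' : d.f 1 = (revC c k).f (0 + 1) := by
    show d.f 1 = c.f (k - (0 + 1))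
    simpa using h1
  have := rigid S hr2 (revC c k) d 0 h0' h1'
  intro i
  have h2 := this i
  rw [zero_add] at h2
  exact h2

/-- cycles sharing one oriented consecutive pair have the same edge set -/
theorem edges_eq_of_pair (c d : AltCycle S.Γ S.O (2 * S.r)) (k : ZMod (2 * S.r))
    (h0 : d.f 0 = c.f k) (h1 : d.f 1 = c.f (k + 1) ∨ d.f 1 = c.f (k - 1)) :
    cycEdges d = cycEdges c := by
  rcases h1 with h1 | h1
  · have h := rigid S hr2 c d k h0 h1
    have : ∀ i, d.f i = (rotC c k).f i := by
      intro i
      rw [h i]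
      show c.f (k + i) = c.f (i + k)
      rw [add_comm]
    rw [cycEdges_congr this, cycEdges_rotC]
  · have h := rigid_refl S hr2 c d k h0 h1
    have : ∀ i, d.f i = (revC c k).f i := fun i => h i
    rw [cycEdges_congr this, cycEdges_revC]

end Rigidity


section TwoCycles

variable (S : Setup V)

/-- any alternating cycle through a common vertex of two distinct alternating cycles
has the edge set of one of them -/
theorem other_cycle (c c' : AltCycle S.Γ S.O (2 * S.r)) (hne : cycEdges c ≠ cycEdges c')
    {z : V} {i i' : ZMod (2 * S.r)} (hz : c.f i = z) (hz' : c'.f i' = z)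
    (d : AltCycle S.Γ S.O (2 * S.r)) {j : ZMod (2 * S.r)} (hd : d.f j = z) :
    cycEdges d = cycEdges c ∨ cycEdges d = cycEdges c' := by
  have hcover := S.alt_cover z
  obtain ⟨A, B, hAB, hset⟩ := Set.ncard_eq_two.mp hcover
  have hmem : ∀ (e : AltCycle S.Γ S.O (2 * S.r)) (ie : ZMod (2 * S.r)), e.f ie = z →
      cycEdges e = A ∨ cycEdges e = B := by
    intro e ie hie
    have : cycEdges e ∈ ({A, B} : Set (Set (Sym2 V))) := by
      rw [← hset]
      exact ⟨⟨e, rfl⟩, hie ▸ mem_supp e ie⟩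
    simpa using this
  rcases hmem c i hz with hc | hc <;> rcases hmem c' i' hz' with hc' | hc' <;>
    rcases hmem d j hd with hd' | hd' <;>
    first
      | exact absurd (hc.trans hc'.symm) hne
      | exact Or.inl (hd'.trans hc.symm)
      | exact Or.inr (hd'.trans hc'.symm)

/-- tail predicate along a cycle -/
def Tl (c : AltCycle S.Γ S.O (2 * S.r)) (i : ZMod (2 * S.r)) : Prop :=
  S.O (c.f i) (c.f (i + 1))

theorem tl_step (c : AltCycle S.Γ S.O (2 * S.r)) (i : ZMod (2 * S.r)) :
    Tl S c i ↔ ¬ Tl S c (i + 1) := by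
  unfold Tl
  rw [c.alt i]
  have hAdj : S.Γ.Adj (c.f (i + 1)) (c.f (i + 1 + 1)) := c.adj (i + 1)
  rw [show i + 2 = i + 1 + 1 by ring]
  exact (S.O_choice hAdj.symm)

theorem tl_step' (c : AltCycle S.Γ S.O (2 * S.r)) (i : ZMod (2 * S.r)) :
    Tl S c (i + 1) ↔ ¬ Tl S c i := iff_not_comm.mp (tl_step S c i)

theorem tl_pred (c : AltCycle S.Γ S.O (2 * S.r)) (i : ZMod (2 * S.r)) :
    Tl S c (i - 1) ↔ ¬ Tl S c i := by
  have h := tl_step' S c (i - 1)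
  rw [show i - 1 + 1 = i by ring] at h
  exact iff_not_comm.mp h

theorem tl_out (c : AltCycle S.Γ S.O (2 * S.r)) (i : ZMod (2 * S.r)) (h : Tl S c i) :
    S.O (c.f i) (c.f (i + 1)) ∧ S.O (c.f i) (c.f (i - 1)) := by
  refine ⟨h, ?_⟩
  have h2 : ¬ Tl S c (i - 1) := fun h3 => ((tl_pred S c i).mp h3) h
  unfold Tl at h2
  rw [show i - 1 + 1 = i by ring] at h2
  have hAdj : S.Γ.Adj (c.f i) (c.f (i - 1)) := by
    have := c.adj (i - 1)
    rw [show i - 1 + 1 = i by ring] at this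
    exact this.symm
  exact (S.O_choice hAdj).mpr h2

theorem tl_in (c : AltCycle S.Γ S.O (2 * S.r)) (i : ZMod (2 * S.r)) (h : ¬ Tl S c i) :
    S.O (c.f (i + 1)) (c.f i) ∧ S.O (c.f (i - 1)) (c.f i) := by
  constructor
  · exact (S.O_choice (c.adj i).symm).mpr h
  · have h2 : Tl S c (i - 1) := (tl_pred S c i).mpr h
    unfold Tl at h2
    rwa [show i - 1 + 1 = i by ring] at h2

theorem tl_int (c : AltCycle S.Γ S.O (2 * S.r)) (h0 : Tl S c 0) :
    ∀ k : ℤ, (Tl S c ((k : ℤ) : ZMod (2 * S.r)) ↔ Even k) := by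
  intro k
  induction k using Int.induction_on with
  | zero =>
    have hc : (((0 : ℤ)) : ZMod (2 * S.r)) = 0 := by norm_num
    rw [hc]
    exact iff_of_true h0 Even.zero
  | succ m ih =>
    have hcast : (((m + 1 : ℤ)) : ZMod (2 * S.r)) = ((m : ℤ) : ZMod (2 * S.r)) + 1 := by
      push_cast; ring
    rw [hcast, tl_step' S c, ih, Int.even_iff, Int.even_iff]
    omega
  | pred m ih =>
    have hcast : (((-(m : ℤ) - 1 : ℤ)) : ZMod (2 * S.r)) = (((-(m : ℤ) : ℤ)) : ZMod (2 * S.r)) - 1 := by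
      push_cast; ring
    rw [hcast, tl_pred S c, ih, Int.even_iff, Int.even_iff]
    omega

theorem tl_int' (c : AltCycle S.Γ S.O (2 * S.r)) (h0 : ¬ Tl S c 0) :
    ∀ k : ℤ, (Tl S c ((k : ℤ) : ZMod (2 * S.r)) ↔ Odd k) := by
  intro k
  induction k using Int.induction_on with
  | zero =>
    have hc : (((0 : ℤ)) : ZMod (2 * S.r)) = 0 := by norm_num
    rw [hc]
    exact iff_of_false h0 (by decide)
  | succ m ih =>
    have hcast : (((m + 1 : ℤ)) : ZMod (2 * S.r)) = ((m : ℤ) : ZMod (2 * S.r)) + 1 := by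
      push_cast; ring
    rw [hcast, tl_step' S c, ih, Int.odd_iff, Int.odd_iff]
    omega
  | pred m ih =>
    have hcast : (((-(m : ℤ) - 1 : ℤ)) : ZMod (2 * S.r)) = (((-(m : ℤ) : ℤ)) : ZMod (2 * S.r)) - 1 := by
      push_cast; ring
    rw [hcast, tl_pred S c, ih, Int.odd_iff, Int.odd_iff]
    omega

variable (hr2 : 2 ≤ S.r)
include hr2

theorem plus_ne_minus (i : ZMod (2 * S.r)) : i + 1 ≠ i - 1 := by
  intro h
  have h2 : (2 : ZMod (2 * S.r)) = 0 := by
    have h3 : i - 1 + 2 = i - 1 + 0 := by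
      rw [add_zero]
      rw [show i - 1 + 2 = i + 1 by ring]
      exact h
    exact add_left_cancel h3
  exact two_ne_zero' S hr2 h2

/-- the four neighbours of a common vertex of two distinct alternating cycles
are pairwise distinct -/
theorem four_distinct (c c' : AltCycle S.Γ S.O (2 * S.r))
    (hne : cycEdges c ≠ cycEdges c') {z : V} {i i' : ZMod (2 * S.r)}
    (hz : c.f i = z) (hz' : c'.f i' = z) :
    c.f (i + 1) ≠ c.f (i - 1) ∧ c'.f (i' + 1) ≠ c'.f (i' - 1) ∧
    (∀ (a b : ZMod (2 * S.r)), (a = i + 1 ∨ a = i - 1) → (b = i' + 1 ∨ b = i' - 1) →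
      c.f a ≠ c'.f b) := by
  refine ⟨fun h => plus_ne_minus S hr2 i (c.inj h),
    fun h => plus_ne_minus S hr2 i' (c'.inj h), ?_⟩
  rintro a b (rfl | rfl) (rfl | rfl) h
  · -- c.f (i+1) = c'.f (i'+1) : aligned pair
    have h0 : (rotC c' i').f 0 = c.f i := by
      show c'.f (0 + i') = c.f i
      rw [zero_add, hz', hz]
    have h1 : (rotC c' i').f 1 = c.f (i + 1) := by
      show c'.f (1 + i') = c.f (i + 1)
      rw [add_comm, ← h]
    have := edges_eq_of_pair S hr2 c (rotC c' i') i h0 (Or.inl h1)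
    rw [cycEdges_rotC] at this
    exact hne this.symm
  · have h0 : (revC c' i').f 0 = c.f i := by
      show c'.f (i' - 0) = c.f i
      rw [sub_zero, hz', hz]
    have h1 : (revC c' i').f 1 = c.f (i + 1) := by
      show c'.f (i' - 1) = c.f (i + 1)
      rw [← h]
    have := edges_eq_of_pair S hr2 c (revC c' i') i h0 (Or.inl h1)
    rw [cycEdges_revC] at this
    exact hne this.symm
  · have h0 : (rotC c' i').f 0 = c.f i := by
      show c'.f (0 + i') = c.f i
      rw [zero_add, hz', hz]
    have h1 : (rotC c' i').f 1 = c.f (i - 1) := by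
      show c'.f (1 + i') = c.f (i - 1)
      rw [add_comm, ← h]
    have := edges_eq_of_pair S hr2 c (rotC c' i') i h0 (Or.inr h1)
    rw [cycEdges_rotC] at this
    exact hne this.symm
  · have h0 : (revC c' i').f 0 = c.f i := by
      show c'.f (i' - 0) = c.f i
      rw [sub_zero, hz', hz]
    have h1 : (revC c' i').f 1 = c.f (i - 1) := by
      show c'.f (i' - 1) = c.f (i - 1)
      rw [← h]
    have := edges_eq_of_pair S hr2 c (revC c' i') i h0 (Or.inr h1)
    rw [cycEdges_revC] at this
    exact hne this.symm

/-- at a common vertex, a vertex is a tail on exactly one of the two cycles -/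
theorem tl_opposite (c c' : AltCycle S.Γ S.O (2 * S.r))
    (hne : cycEdges c ≠ cycEdges c') {z : V} {i i' : ZMod (2 * S.r)}
    (hz : c.f i = z) (hz' : c'.f i' = z) :
    Tl S c i ↔ ¬ Tl S c' i' := by
  obtain ⟨hd1, hd2, hd3⟩ := four_distinct S hr2 c c' hne hz hz'
  by_cases h1 : Tl S c i <;> by_cases h2 : Tl S c' i'
  · exfalso
    obtain ⟨ho1, ho2⟩ := tl_out S c i h1
    obtain ⟨ho3, -⟩ := tl_out S c' i' h2
    rw [hz] at ho1 ho2
    rw [hz'] at ho3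
    have hm1 : c.f (i + 1) ∈ outS S z := ho1
    have hm2 : c.f (i - 1) ∈ outS S z := ho2
    have hm3 : c'.f (i' + 1) ∈ outS S z := ho3
    exact hd1 (eq_of_two (out_in_card S z).1 hm1 hm2 hm3
      (hd3 _ _ (Or.inl rfl) (Or.inl rfl)) (hd3 _ _ (Or.inr rfl) (Or.inl rfl)))
  · exact iff_of_true h1 h2
  · exact iff_of_false h1 (not_not_intro h2)
  · exfalso
    obtain ⟨ho1, ho2⟩ := tl_in S c i h1
    obtain ⟨ho3, -⟩ := tl_in S c' i' h2
    rw [hz] at ho1 ho2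
    rw [hz'] at ho3
    have hm1 : c.f (i + 1) ∈ inS S z := ho1
    have hm2 : c.f (i - 1) ∈ inS S z := ho2
    have hm3 : c'.f (i' + 1) ∈ inS S z := ho3
    exact hd1 (eq_of_two (out_in_card S z).2 hm1 hm2 hm3
      (hd3 _ _ (Or.inl rfl) (Or.inl rfl)) (hd3 _ _ (Or.inr rfl) (Or.inl rfl)))

end TwoCycles


section Jump

variable (S : Setup V) (J : JumpData S)

/-- the incidence relation between the two cycles, at multiples of `ell` -/
def Rel (m n : ℤ) : Prop :=
  J.c'.f ((m * (J.ell : ℤ) : ℤ) : ZMod (2 * S.r)) = J.c.f ((n * (J.ell : ℤ) : ℤ) : ZMod (2 * S.r))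

theorem ell_pos : 0 < J.ell := by
  by_contra h
  have h0 : J.ell = 0 := by omega
  have := J.hell
  rw [h0] at this
  have := S.r_pos
  omega

theorem att_two_le (hdvd : ¬ S.att ∣ S.r) : 2 ≤ S.att := by
  by_contra h
  have h1 : S.att = 1 := by have := S.att_pos; omega
  exact hdvd (h1 ▸ one_dvd _)

theorem ell_odd (hdvd : ¬ S.att ∣ S.r) : Odd J.ell := by
  rw [Nat.odd_iff]
  by_contra h
  have heven : J.ell % 2 = 0 := by omega
  obtain ⟨t, ht⟩ := Nat.dvd_of_mod_eq_zero heven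
  apply hdvd
  have h2 := J.hell
  rw [ht] at h2
  have h4 : 2 * S.r = 2 * (S.att * t) := by rw [← h2]; ring
  exact ⟨t, by omega⟩

include J in
theorem att_even (hdvd : ¬ S.att ∣ S.r) : Even S.att := by
  have hodd := ell_odd S J hdvd
  rcases Nat.even_or_odd S.att with h | h
  · exact h
  · exfalso
    have hmul : Odd (S.att * J.ell) := h.mul hodd
    rw [J.hell] at hmul
    rw [Nat.odd_iff] at hmul
    omega

/-- congruence: `Rel` only depends on arguments mod `att` -/
theorem rel_congr {m m' n n' : ℤ} (hm : (S.att : ℤ) ∣ m - m') (hn : (S.att : ℤ) ∣ n - n')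
    (h : Rel S J m n) : Rel S J m' n' := by
  have key : ∀ x y : ℤ, (S.att : ℤ) ∣ x - y →
      ((x * (J.ell : ℤ) : ℤ) : ZMod (2 * S.r)) = ((y * (J.ell : ℤ) : ℤ) : ZMod (2 * S.r)) := by
    intro x y hxy
    rw [ZMod.intCast_eq_intCast_iff]
    rw [Int.modEq_iff_dvd]
    obtain ⟨t, ht⟩ := hxy
    have h2r : ((2 * S.r : ℕ) : ℤ) = (S.att : ℤ) * (J.ell : ℤ) := by
      rw [← J.hell]; push_cast; ring
    have : x * (J.ell : ℤ) - y * (J.ell : ℤ) = ((2 * S.r : ℕ) : ℤ) * t := by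
      rw [h2r]
      calc x * (J.ell : ℤ) - y * (J.ell : ℤ) = (x - y) * (J.ell : ℤ) := by ring
      _ = (S.att : ℤ) * t * (J.ell : ℤ) := by rw [ht]
      _ = (S.att : ℤ) * (J.ell : ℤ) * t := by ring
    exact ⟨-t, by linear_combination -this⟩
  unfold Rel at h ⊢
  rw [← key m m' hm, ← key n n' hn]
  exact h

theorem dvd_of_index_eq {x y : ℤ} (hL : ((x * (J.ell : ℤ) : ℤ) : ZMod (2 * S.r))
    = ((y * (J.ell : ℤ) : ℤ) : ZMod (2 * S.r))) : (S.att : ℤ) ∣ x - y := by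
  rw [ZMod.intCast_eq_intCast_iff] at hL
  have h1 : ((2 * S.r : ℕ) : ℤ) ∣ y * (J.ell : ℤ) - x * (J.ell : ℤ) := hL.dvd
  have h2r : ((2 * S.r : ℕ) : ℤ) = (S.att : ℤ) * (J.ell : ℤ) := by
    rw [← J.hell]; push_cast; ring
  rw [h2r] at h1
  have h2 : (S.att : ℤ) * (J.ell : ℤ) ∣ (y - x) * (J.ell : ℤ) := by
    rwa [show (y - x) * (J.ell : ℤ) = y * (J.ell : ℤ) - x * (J.ell : ℤ) by ring]
  have hl0 : (J.ell : ℤ) ≠ 0 := by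
    have h := ell_pos S J
    exact_mod_cast h.ne' 
  have h3 : (S.att : ℤ) ∣ y - x := (mul_dvd_mul_iff_right hl0).mp h2
  exact dvd_sub_comm.mp h3

theorem rel_injx {m m' n : ℤ} (h : Rel S J m n) (h' : Rel S J m' n) :
    (S.att : ℤ) ∣ m - m' :=
  dvd_of_index_eq S J (J.c'.inj (h.trans h'.symm) :)

theorem rel_injy {m n n' : ℤ} (h : Rel S J m n) (h' : Rel S J m n') :
    (S.att : ℤ) ∣ n - n' :=
  dvd_of_index_eq S J (J.c.inj (h.symm.trans h') :)

theorem rel00 : Rel S J 0 0 := by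
  unfold Rel
  have h0 : ((0 * (J.ell : ℤ) : ℤ) : ZMod (2 * S.r)) = 0 := by norm_num
  rw [h0, J.hc, J.hc']

theorem rel_e1 : ∃ δ : ℤ, (δ = 1 ∨ δ = -1) ∧ Rel S J (J.qt : ℤ) δ := by
  have hcast1 : (((J.qt * J.ell : ℕ)) : ZMod (2 * S.r))
      = (((J.qt : ℤ) * (J.ell : ℤ) : ℤ) : ZMod (2 * S.r)) := by push_cast; ring
  rcases J.hqt with h | h
  · refine ⟨1, Or.inl rfl, ?_⟩
    unfold Rel
    rw [show ((1 : ℤ) * (J.ell : ℤ) : ℤ) = ((J.ell : ℕ) : ℤ) by push_cast; ring]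
    rw [← hcast1]
    rw [show (((J.ell : ℕ) : ℤ) : ZMod (2 * S.r)) = ((J.ell : ℕ) : ZMod (2 * S.r)) by push_cast; ring]
    exact h
  · refine ⟨-1, Or.inr rfl, ?_⟩
    unfold Rel
    rw [← hcast1]
    rw [show (((-1 : ℤ) * (J.ell : ℤ) : ℤ) : ZMod (2 * S.r)) = -((J.ell : ℕ) : ZMod (2 * S.r)) by
      push_cast; ring]
    exact h

theorem rel_e2 : ∃ δ' : ℤ, (δ' = 1 ∨ δ' = -1) ∧ Rel S J δ' (J.qh : ℤ) := by
  have hcast1 : (((J.qh * J.ell : ℕ)) : ZMod (2 * S.r))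
      = (((J.qh : ℤ) * (J.ell : ℤ) : ℤ) : ZMod (2 * S.r)) := by push_cast; ring
  rcases J.hqh with h | h
  · refine ⟨1, Or.inl rfl, ?_⟩
    unfold Rel
    rw [show (((1 : ℤ) * (J.ell : ℤ) : ℤ) : ZMod (2 * S.r)) = ((J.ell : ℕ) : ZMod (2 * S.r)) by
      push_cast; ring]
    rw [← hcast1]
    exact h.symm
  · refine ⟨-1, Or.inr rfl, ?_⟩
    unfold Rel
    rw [show (((-1 : ℤ) * (J.ell : ℤ) : ℤ) : ZMod (2 * S.r)) = -((J.ell : ℕ) : ZMod (2 * S.r)) by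
      push_cast; ring]
    rw [← hcast1]
    exact h.symm

theorem rel_min_t : ∀ m : ℤ, 0 ≤ m → m < (J.qt : ℤ) → ¬ Rel S J m 1 ∧ ¬ Rel S J m (-1) := by
  intro m h0 hlt
  obtain ⟨k, rfl⟩ : ∃ k : ℕ, m = (k : ℤ) := ⟨m.toNat, (Int.toNat_of_nonneg h0).symm⟩
  have hm := J.hqt_min k (by exact_mod_cast hlt)
  have hcast1 : (((k * J.ell : ℕ)) : ZMod (2 * S.r))
      = (((k : ℤ) * (J.ell : ℤ) : ℤ) : ZMod (2 * S.r)) := by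
    push_cast; ring
  constructor
  · intro hrel
    apply hm
    left
    unfold Rel at hrel
    rw [hcast1]
    rw [show ((J.ell : ℕ) : ZMod (2 * S.r)) = (((1 : ℤ) * (J.ell : ℤ) : ℤ) : ZMod (2 * S.r)) by
      push_cast; ring]
    exact hrel
  · intro hrel
    apply hm
    right
    unfold Rel at hrel
    rw [hcast1]
    rw [show -((J.ell : ℕ) : ZMod (2 * S.r)) = (((-1 : ℤ) * (J.ell : ℤ) : ℤ) : ZMod (2 * S.r)) by
      push_cast; ring]
    exact hrel

theorem rel_min_h : ∀ n : ℤ, 0 ≤ n → n < (J.qh : ℤ) → ¬ Rel S J 1 n ∧ ¬ Rel S J (-1) n := by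
  intro n h0 hlt
  obtain ⟨k, rfl⟩ : ∃ k : ℕ, n = (k : ℤ) := ⟨n.toNat, (Int.toNat_of_nonneg h0).symm⟩
  have hm := J.hqh_min k (by exact_mod_cast hlt)
  have hcast1 : (((k * J.ell : ℕ)) : ZMod (2 * S.r))
      = (((k : ℤ) * (J.ell : ℤ) : ℤ) : ZMod (2 * S.r)) := by
    push_cast; ring
  constructor
  · intro hrel
    apply hm
    left
    unfold Rel at hrel
    rw [hcast1]
    rw [show ((J.ell : ℕ) : ZMod (2 * S.r)) = (((1 : ℤ) * (J.ell : ℤ) : ℤ) : ZMod (2 * S.r)) by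
      push_cast; ring]
    exact hrel.symm
  · intro hrel
    apply hm
    right
    unfold Rel at hrel
    rw [hcast1]
    rw [show -((J.ell : ℕ) : ZMod (2 * S.r)) = (((-1 : ℤ) * (J.ell : ℤ) : ℤ) : ZMod (2 * S.r)) by
      push_cast; ring]
    exact hrel.symm

theorem qt_bounds (hdvd : ¬ S.att ∣ S.r) : 1 ≤ J.qt ∧ J.qt < S.att := by
  obtain ⟨δ, hδ, he1⟩ := rel_e1 S J
  have ha2 : 2 ≤ S.att := att_two_le S hdvd
  constructor
  · by_contra h
    have h0 : J.qt = 0 := by omega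
    have h2 : Rel S J ((J.qt : ℤ)) δ := he1
    rw [h0] at h2
    have h3 : Rel S J 0 δ := by simpa using h2
    have hd := rel_injy S J h3 (rel00 S J)
    have h1 : (S.att : ℤ) ∣ 1 := by
      rcases hδ with rfl | rfl
      · simpa using hd
      · rw [show (-1 : ℤ) - 0 = -(1 : ℤ) by ring] at hd
        exact dvd_neg.mp hd
    have := Int.le_of_dvd one_pos h1
    omega
  · by_contra h
    push_neg at h
    have hrel : Rel S J ((J.qt : ℤ) - (S.att : ℤ)) δ := by
      apply rel_congr S J (m := (J.qt : ℤ)) (n := δ) ⟨1, by ring⟩ ⟨0, by ring⟩ he1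
    have hmin := rel_min_t S J ((J.qt : ℤ) - (S.att : ℤ)) (by omega) (by omega)
    rcases hδ with rfl | rfl
    · exact hmin.1 hrel
    · exact hmin.2 hrel

theorem qh_bounds (hdvd : ¬ S.att ∣ S.r) : 1 ≤ J.qh ∧ J.qh < S.att := by
  obtain ⟨δ', hδ', he2⟩ := rel_e2 S J
  have ha2 : 2 ≤ S.att := att_two_le S hdvd
  constructor
  · by_contra h
    have h0 : J.qh = 0 := by omega
    have h2 : Rel S J δ' ((J.qh : ℤ)) := he2
    rw [h0] at h2
    have h3 : Rel S J δ' 0 := by simpa using h2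
    have hd := rel_injx S J h3 (rel00 S J)
    have h1 : (S.att : ℤ) ∣ 1 := by
      rcases hδ' with rfl | rfl
      · simpa using hd
      · rw [show (-1 : ℤ) - 0 = -(1 : ℤ) by ring] at hd
        exact dvd_neg.mp hd
    have := Int.le_of_dvd one_pos h1
    omega
  · by_contra h
    push_neg at h
    have hrel : Rel S J δ' ((J.qh : ℤ) - (S.att : ℤ)) := by
      apply rel_congr S J (m := δ') (n := (J.qh : ℤ)) ⟨0, by ring⟩ ⟨1, by ring⟩ he2
    have hmin := rel_min_h S J ((J.qh : ℤ) - (S.att : ℤ)) (by omega) (by omega)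
    rcases hδ' with rfl | rfl
    · exact hmin.1 hrel
    · exact hmin.2 hrel

end Jump


section Parity

variable (S : Setup V) (J : JumpData S)

theorem tl_c0 : Tl S J.c 0 := by
  unfold Tl
  rw [J.hc, zero_add]
  exact J.htail₁

theorem tl_c'0 (hr2 : 2 ≤ S.r) : ¬ Tl S J.c' 0 :=
  (tl_opposite S hr2 J.c J.c' J.hne J.hc J.hc').mp (tl_c0 S J)

theorem even_mul_odd {x l : ℤ} (hl : Odd l) : Even (x * l) ↔ Even x := by
  rw [Int.even_mul]
  have : ¬ Even l := by
    rw [Int.even_iff]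
    rw [Int.odd_iff] at hl
    omega
  tauto

theorem rel_parity (hr2 : 2 ≤ S.r) (hdvd : ¬ S.att ∣ S.r) {m n : ℤ} (h : Rel S J m n) :
    (Even m ↔ Even n) := by
  have hlodd : Odd (J.ell : ℤ) := by
    have := ell_odd S J hdvd
    exact_mod_cast this
  have hTc := tl_int S J.c (tl_c0 S J) (n * (J.ell : ℤ))
  have hTc' := tl_int' S J.c' (tl_c'0 S J hr2) (m * (J.ell : ℤ))
  have hopp := tl_opposite S hr2 J.c J.c' J.hne
    (z := J.c.f ((n * (J.ell : ℤ) : ℤ) : ZMod (2 * S.r))) rfl h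
  rw [hTc] at hopp
  rw [hTc'] at hopp
  rw [Int.not_odd_iff_even] at hopp
  rw [even_mul_odd hlodd, even_mul_odd hlodd] at hopp
  exact hopp.symm

/-- the reversal of `c'` fixing `v` : `Rel m n → Rel (-m) (εₕ n)` -/
theorem mapR (hr2 : 2 ≤ S.r) :
    ∃ εh : ℤ, (εh = 1 ∨ εh = -1) ∧
      ∀ m n : ℤ, Rel S J m n → Rel S J (-m) (εh * n) := by
  -- v is a double head on c'
  have hv' : ¬ Tl S J.c' 0 := tl_c'0 S J hr2
  obtain ⟨hin1, hin2⟩ := tl_in S J.c' 0 hv'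
  rw [J.hc'] at hin1 hin2
  -- hin1 : O (c'.f (0+1)) v, hin2 : O (c'.f (0-1)) v
  have hin1' : S.O (J.c'.f 1) J.v := by rwa [zero_add] at hin1
  have hin2' : S.O (J.c'.f (-1)) J.v := by
    rwa [show (0 : ZMod (2*S.r)) - 1 = -1 by ring] at hin2
  obtain ⟨g, hgG, hg1, hg2⟩ := S.O_orbit hin1' hin2'
  -- g (c'.f 1) = c'.f (-1), g v = v
  -- image of c' : reflection
  set d := gmap S g hgG J.c' with hd
  have hd0 : d.f 0 = J.c'.f (0 : ZMod (2*S.r)) := by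
    show g (J.c'.f 0) = _
    rw [J.hc', hg2]
  have hd1 : d.f 1 = J.c'.f ((0 : ZMod (2*S.r)) - 1) := by
    show g (J.c'.f 1) = _
    rw [hg1]
    congr 1
    ring
  have hrig1 : ∀ i, d.f i = J.c'.f (0 - i) := rigid_refl S hr2 J.c' d 0 hd0 hd1
  have hEd : cycEdges d = cycEdges J.c' := by
    have heq : ∀ i, d.f i = (revC J.c' 0).f i := fun i => hrig1 i
    rw [cycEdges_congr heq, cycEdges_revC]
  -- image of c
  set d' := gmap S g hgG J.c with hd'
  have hd'0 : d'.f 0 = J.v := by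
    show g (J.c.f 0) = _
    rw [J.hc, hg2]
  have hoc := other_cycle S J.c J.c' J.hne J.hc J.hc' d' hd'0
  have hEd' : cycEdges d' = cycEdges J.c := by
    rcases hoc with h | h
    · exact h
    · exfalso
      have h1 : Sym2.map (g : V → V) '' cycEdges J.c = cycEdges J.c' := by
        rw [← cycEdges_gmap]; exact h
      have h2 : Sym2.map (g : V → V) '' cycEdges J.c' = cycEdges J.c' := by
        rw [← cycEdges_gmap]; exact hEd
      have hinj : Function.Injective (Sym2.map (g : V → V)) :=
        Sym2.map.injective g.injective
      have := Set.image_injective.mpr hinj (h1.trans h2.symm)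
      exact J.hne this
  -- extract the base pair on c
  have hedge : s(d'.f 0, d'.f 1) ∈ cycEdges J.c := by
    rw [← hEd']
    refine ⟨0, ?_⟩
    show s(d'.f 0, d'.f (0 + 1)) = _
    rw [zero_add]
  obtain ⟨i₀, hcase⟩ := edge_cases J.c hedge
  have hv0 : J.c.f 0 = J.v := J.hc
  rcases hcase with ⟨h1, h2⟩ | ⟨h1, h2⟩
  · -- aligned : i₀ = 0, g (c.f 1) = c.f 1
    have hi₀ : i₀ = 0 := J.c.inj (by rw [← h1, hd'0, ← hv0])
    rw [hi₀] at h2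
    have hrig2 : ∀ i, d'.f i = J.c.f (0 + i) := by
      apply rigid S hr2 J.c d' 0
      · rw [hd'0, hv0]
      · rw [h2, zero_add]
    refine ⟨1, Or.inl rfl, ?_⟩
    intro m n hmn
    have happ : g (J.c'.f ((m * (J.ell : ℤ) : ℤ) : ZMod (2*S.r)))
        = g (J.c.f ((n * (J.ell : ℤ) : ℤ) : ZMod (2*S.r))) := by rw [hmn]
    have hL : g (J.c'.f ((m * (J.ell : ℤ) : ℤ) : ZMod (2*S.r)))
        = J.c'.f (((-m) * (J.ell : ℤ) : ℤ) : ZMod (2*S.r)) := by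
      have := hrig1 ((m * (J.ell : ℤ) : ℤ) : ZMod (2*S.r))
      rw [show ((0 : ZMod (2*S.r)) - ((m * (J.ell : ℤ) : ℤ) : ZMod (2*S.r)))
        = (((-m) * (J.ell : ℤ) : ℤ) : ZMod (2*S.r)) by push_cast; ring] at this
      exact this
    have hR : g (J.c.f ((n * (J.ell : ℤ) : ℤ) : ZMod (2*S.r)))
        = J.c.f ((n * (J.ell : ℤ) : ℤ) : ZMod (2*S.r)) := by
      have := hrig2 ((n * (J.ell : ℤ) : ℤ) : ZMod (2*S.r))
      rw [zero_add] at this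
      exact this
    unfold Rel
    rw [show (1 : ℤ) * n = n by ring]
    rw [← hL, ← hR]
    exact happ
  · -- reflected : i₀ + 1 = 0, g (c.f 1) = c.f (-1)
    have hi₀ : i₀ = 0 - 1 := by
      have h4 : J.c.f (i₀ + 1) = J.c.f 0 := by rw [← h2, hd'0, hv0]
      have h3 := J.c.inj h4
      rw [← h3]; ring
    rw [hi₀] at h1
    have hrig2 : ∀ i, d'.f i = J.c.f (0 - i) := by
      apply rigid_refl S hr2 J.c d' 0
      · rw [hd'0, hv0]
      · rw [h1]
    refine ⟨-1, Or.inr rfl, ?_⟩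
    intro m n hmn
    have happ : g (J.c'.f ((m * (J.ell : ℤ) : ℤ) : ZMod (2*S.r)))
        = g (J.c.f ((n * (J.ell : ℤ) : ℤ) : ZMod (2*S.r))) := by rw [hmn]
    have hL : g (J.c'.f ((m * (J.ell : ℤ) : ℤ) : ZMod (2*S.r)))
        = J.c'.f (((-m) * (J.ell : ℤ) : ℤ) : ZMod (2*S.r)) := by
      have := hrig1 ((m * (J.ell : ℤ) : ℤ) : ZMod (2*S.r))
      rw [show ((0 : ZMod (2*S.r)) - ((m * (J.ell : ℤ) : ℤ) : ZMod (2*S.r)))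
        = (((-m) * (J.ell : ℤ) : ℤ) : ZMod (2*S.r)) by push_cast; ring] at this
      exact this
    have hR : g (J.c.f ((n * (J.ell : ℤ) : ℤ) : ZMod (2*S.r)))
        = J.c.f (((-1 * n) * (J.ell : ℤ) : ℤ) : ZMod (2*S.r)) := by
      have := hrig2 ((n * (J.ell : ℤ) : ℤ) : ZMod (2*S.r))
      rw [show ((0 : ZMod (2*S.r)) - ((n * (J.ell : ℤ) : ℤ) : ZMod (2*S.r)))
        = (((-1 * n) * (J.ell : ℤ) : ℤ) : ZMod (2*S.r)) by push_cast; ring] at this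
      exact this
    unfold Rel
    rw [← hL, ← hR]
    exact happ

end Parity


section MapA

variable (S : Setup V) (J : JumpData S)

theorem qt_odd (hr2 : 2 ≤ S.r) (hdvd : ¬ S.att ∣ S.r) {δ : ℤ} (hδ : δ = 1 ∨ δ = -1)
    (he1 : Rel S J (J.qt : ℤ) δ) : Odd ((J.qt : ℤ)) := by
  have hpar := rel_parity S J hr2 hdvd he1
  have hδodd : ¬ Even δ := by rcases hδ with rfl | rfl <;> decide
  rw [← Int.not_even_iff_odd]
  intro h
  exact hδodd (hpar.mp h)

theorem mapA (hr2 : 2 ≤ S.r) (hdvd : ¬ S.att ∣ S.r) {δ : ℤ} (hδ : δ = 1 ∨ δ = -1)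
    (he1 : Rel S J (J.qt : ℤ) δ) :
    ∃ ε : ℤ, (ε = 1 ∨ ε = -1) ∧
      ∀ m n : ℤ, Rel S J m n → Rel S J ((J.qt : ℤ) + n) (δ + ε * m) := by
  have hqt_odd : Odd ((J.qt : ℤ)) := qt_odd S J hr2 hdvd hδ he1
  have hlodd : Odd (J.ell : ℤ) := by
    have := ell_odd S J hdvd
    exact_mod_cast this
  set qtl : ZMod (2*S.r) := (((J.qt : ℤ) * (J.ell : ℤ) : ℤ) : ZMod (2*S.r)) with hqtl
  have htl : Tl S J.c' qtl :=
    (tl_int' S J.c' (tl_c'0 S J hr2) ((J.qt : ℤ) * (J.ell : ℤ))).mpr (hqt_odd.mul hlodd)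
  have harc : S.O (J.c'.f qtl) (J.c'.f (qtl + 1)) := htl
  obtain ⟨τ, hτG, hτv, hτ1⟩ := S.O_orbit J.htail₁ harc
  set d := gmap S τ hτG J.c with hdd
  have hd0 : d.f 0 = J.c'.f qtl := by
    show τ (J.c.f 0) = _
    rw [J.hc, hτv]
  have hd1 : d.f 1 = J.c'.f (qtl + 1) := by
    show τ (J.c.f 1) = _
    rw [hτ1]
  have hrig1 : ∀ i, d.f i = J.c'.f (qtl + i) := rigid S hr2 J.c' d qtl hd0 hd1
  have hEd : cycEdges d = cycEdges J.c' := by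
    have heq : ∀ i, d.f i = (rotC J.c' qtl).f i := by
      intro i
      rw [hrig1 i]
      show _ = J.c'.f (i + qtl)
      rw [add_comm]
    rw [cycEdges_congr heq, cycEdges_rotC]
  set d' := gmap S τ hτG J.c' with hdd'
  have hd'0 : d'.f 0 = J.c'.f qtl := by
    show τ (J.c'.f 0) = _
    rw [J.hc', hτv]
  set dl : ZMod (2*S.r) := ((δ * (J.ell : ℤ) : ℤ) : ZMod (2*S.r)) with hdl
  have hz : J.c.f dl = J.c'.f qtl := he1.symm
  have hoc := other_cycle S J.c J.c' J.hne (z := J.c'.f qtl) hz rfl d' hd'0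
  have hEd' : cycEdges d' = cycEdges J.c := by
    rcases hoc with h | h
    · exact h
    · exfalso
      have h1 : Sym2.map (τ : V → V) '' cycEdges J.c = cycEdges J.c' := by
        rw [← cycEdges_gmap]; exact hEd
      have h2 : Sym2.map (τ : V → V) '' cycEdges J.c' = cycEdges J.c' := by
        rw [← cycEdges_gmap]; exact h
      exact J.hne (Set.image_injective.mpr (Sym2.map.injective τ.injective)
        (h1.trans h2.symm))
  have hedge : s(d'.f 0, d'.f 1) ∈ cycEdges J.c := by
    rw [← hEd']
    refine ⟨0, ?_⟩
    show s(d'.f 0, d'.f (0 + 1)) = _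
    rw [zero_add]
  obtain ⟨i₀, hcase⟩ := edge_cases J.c hedge
  have hd'0' : d'.f 0 = J.c.f dl := by rw [hd'0, ← hz]
  rcases hcase with ⟨h1, h2⟩ | ⟨h1, h2⟩
  · -- aligned
    have hi₀ : i₀ = dl := J.c.inj (by rw [← h1, hd'0'])
    rw [hi₀] at h2
    have hrig2 : ∀ i, d'.f i = J.c.f (dl + i) := rigid S hr2 J.c d' dl hd'0' h2
    refine ⟨1, Or.inl rfl, ?_⟩
    intro m n hmn
    have happ : τ (J.c'.f ((m * (J.ell : ℤ) : ℤ) : ZMod (2*S.r)))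
        = τ (J.c.f ((n * (J.ell : ℤ) : ℤ) : ZMod (2*S.r))) := by
      rw [hmn]
    have hL := hrig2 ((m * (J.ell : ℤ) : ℤ) : ZMod (2*S.r))
    have hR := hrig1 ((n * (J.ell : ℤ) : ℤ) : ZMod (2*S.r))
    unfold Rel
    rw [show (((((J.qt : ℤ) + n) * (J.ell : ℤ) : ℤ)) : ZMod (2*S.r))
      = qtl + ((n * (J.ell : ℤ) : ℤ) : ZMod (2*S.r)) by rw [hqtl]; push_cast; ring]
    rw [show ((((δ + 1 * m) * (J.ell : ℤ) : ℤ)) : ZMod (2*S.r))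
      = dl + ((m * (J.ell : ℤ) : ℤ) : ZMod (2*S.r)) by rw [hdl]; push_cast; ring]
    rw [← hL, ← hR]
    exact happ.symm
  · -- reflected
    have hi₀ : i₀ = dl - 1 := by
      have h4 : J.c.f (i₀ + 1) = J.c.f dl := by rw [← h2, hd'0']
      have h3 := J.c.inj h4
      rw [← h3]; ring
    rw [hi₀] at h1
    have h1' : d'.f 1 = J.c.f (dl - 1) := h1
    have hrig2 : ∀ i, d'.f i = J.c.f (dl - i) := rigid_refl S hr2 J.c d' dl hd'0' h1'
    refine ⟨-1, Or.inr rfl, ?_⟩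
    intro m n hmn
    have happ : τ (J.c'.f ((m * (J.ell : ℤ) : ℤ) : ZMod (2*S.r)))
        = τ (J.c.f ((n * (J.ell : ℤ) : ℤ) : ZMod (2*S.r))) := by
      rw [hmn]
    have hL := hrig2 ((m * (J.ell : ℤ) : ℤ) : ZMod (2*S.r))
    have hR := hrig1 ((n * (J.ell : ℤ) : ℤ) : ZMod (2*S.r))
    unfold Rel
    rw [show (((((J.qt : ℤ) + n) * (J.ell : ℤ) : ℤ)) : ZMod (2*S.r))
      = qtl + ((n * (J.ell : ℤ) : ℤ) : ZMod (2*S.r)) by rw [hqtl]; push_cast; ring]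
    rw [show ((((δ + (-1) * m) * (J.ell : ℤ) : ℤ)) : ZMod (2*S.r))
      = dl - ((m * (J.ell : ℤ) : ℤ) : ZMod (2*S.r)) by rw [hdl]; push_cast; ring]
    rw [← hL, ← hR]
    exact happ.symm

end MapA


section Endgame

variable (S : Setup V) (J : JumpData S)

theorem rel_arg {m m' n n' : ℤ} (h : Rel S J m n) (hm : m = m') (hn : n = n') :
    Rel S J m' n' := hm ▸ hn ▸ h

theorem att_ne_zero : (S.att : ℤ) ≠ 0 := by
  have := S.att_pos
  exact_mod_cast this.ne'

/-- ℤ-iteration of a translation-closure property of `Rel` -/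
theorem rel_iter (u v : ℤ)
    (hstep : ∀ m n : ℤ, Rel S J m n → Rel S J (m + u) (n + v)) :
    ∀ (M : ℤ) (m n : ℤ), Rel S J m n → Rel S J (m + M * u) (n + M * v) := by
  have hnat : ∀ (k : ℕ) (m n : ℤ), Rel S J m n → Rel S J (m + k * u) (n + k * v) := by
    intro k
    induction k with
    | zero => intro m n h; simpa using h
    | succ k ih =>
      intro m n h
      have h1 := hstep _ _ (ih m n h)
      exact rel_arg S J h1 (by push_cast; ring) (by push_cast; ring)
  intro M m n h
  set k : ℕ := (M % (S.att : ℤ)).toNat with hk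
  have hknn : ((k : ℤ)) = M % (S.att : ℤ) :=
    Int.toNat_of_nonneg (Int.emod_nonneg M (att_ne_zero S))
  have hdvd : (S.att : ℤ) ∣ M - k := by
    rw [hknn, Int.emod_def]
    exact ⟨M / (S.att : ℤ), by ring⟩
  have h1 := hnat k m n h
  apply rel_congr S J (m := m + k * u) (n := n + k * v) ?_ ?_ h1
  · obtain ⟨t, ht⟩ := hdvd
    exact ⟨-(t * u), by rw [show (M : ℤ) = k + (S.att : ℤ) * t by omega]; ring⟩
  · obtain ⟨t, ht⟩ := hdvd
    exact ⟨-(t * v), by rw [show (M : ℤ) = k + (S.att : ℤ) * t by omega]; ring⟩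

theorem endgame (hdvd : ¬ S.att ∣ S.r) :
    ((S.att : ℤ) ∣ (J.qt : ℤ) * (J.qt : ℤ) - 1 ∨
      (S.att : ℤ) ∣ (J.qt : ℤ) * (J.qt : ℤ) + 1) ∧ J.qt = J.qh := by
  have hr2 := r_ge_two S
  have ha2 : 2 ≤ S.att := att_two_le S hdvd
  have haeven : Even S.att := att_even S J hdvd
  obtain ⟨δ, hδ, he1⟩ := rel_e1 S J
  obtain ⟨δ', hδ', he2⟩ := rel_e2 S J
  obtain ⟨hqt1, hqtA⟩ := qt_bounds S J hdvd
  obtain ⟨hqh1, hqhA⟩ := qh_bounds S J hdvd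
  by_cases ha2' : S.att = 2
  · have hqt : J.qt = 1 := by omega
    have hqh : J.qh = 1 := by omega
    refine ⟨Or.inl ?_, hqt.trans hqh.symm⟩
    rw [hqt, ha2']
    norm_num
  have ha4 : 4 ≤ S.att := by
    obtain ⟨t, ht⟩ := haeven
    omega
  obtain ⟨εh, hεh, hRe⟩ := mapR S J hr2
  have hεh' : εh = -1 := by
    rcases hεh with rfl | rfl
    · exfalso
      have h1 : Rel S J (-δ') (1 * (J.qh : ℤ)) := hRe δ' _ he2
      rw [one_mul] at h1
      have hd := rel_injx S J h1 he2
      have h2 : (S.att : ℤ) ∣ 2 := by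
        rcases hδ' with rfl | rfl
        · rw [show (-(1:ℤ)) - 1 = -2 by ring] at hd
          exact dvd_neg.mp hd
        · rw [show (-(-1:ℤ)) - (-1) = 2 by ring] at hd
          exact hd
      have := Int.le_of_dvd (by norm_num) h2
      omega
    · rfl
  have Rneg : ∀ m n : ℤ, Rel S J m n → Rel S J (-m) (-n) := by
    intro m n h
    have := hRe m n h
    rwa [hεh', neg_one_mul] at this
  -- 2 qt ≤ a and 2 qh ≤ a
  have h2qt : 2 * (J.qt : ℤ) ≤ (S.att : ℤ) := by
    by_contra hcon
    push_neg at hcon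
    have h1 : Rel S J (-(J.qt : ℤ)) (-δ) := Rneg _ _ he1
    have h2 : Rel S J ((S.att : ℤ) - (J.qt : ℤ)) (-δ) :=
      rel_congr S J ⟨-1, by ring⟩ ⟨0, by ring⟩ h1
    have hmin := rel_min_t S J ((S.att : ℤ) - (J.qt : ℤ)) (by omega) (by omega)
    rcases hδ with rfl | rfl
    · exact hmin.2 h2
    · exact hmin.1 (rel_arg S J h2 rfl (by norm_num))
  have h2qh : 2 * (J.qh : ℤ) ≤ (S.att : ℤ) := by
    by_contra hcon
    push_neg at hcon
    have h1 : Rel S J (-δ') (-(J.qh : ℤ)) := Rneg _ _ he2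
    have h2 : Rel S J (-δ') ((S.att : ℤ) - (J.qh : ℤ)) :=
      rel_congr S J ⟨0, by ring⟩ ⟨-1, by ring⟩ h1
    have hmin := rel_min_h S J ((S.att : ℤ) - (J.qh : ℤ)) (by omega) (by omega)
    rcases hδ' with rfl | rfl
    · exact hmin.2 (rel_arg S J h2 (by norm_num) rfl)
    · exact hmin.1 (rel_arg S J h2 (by norm_num) rfl)
  obtain ⟨ε, hε, hA⟩ := mapA S J hr2 hdvd hδ he1
  -- exclude δ + ε δ' = 0
  have hsum : ε * δ' = δ := by
    by_contra hcon
    have h0 : δ + ε * δ' = 0 := by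
      rcases hδ with rfl | rfl <;> rcases hδ' with rfl | rfl <;> rcases hε with rfl | rfl <;>
        omega
    have hAe2 : Rel S J ((J.qt : ℤ) + (J.qh : ℤ)) (δ + ε * δ') := hA δ' (J.qh : ℤ) he2
    rw [h0] at hAe2
    have hd := rel_injx S J hAe2 (rel00 S J)
    rw [sub_zero] at hd
    have hle := Int.le_of_dvd (by omega) hd
    have hqq : (J.qt : ℤ) + (J.qh : ℤ) = (S.att : ℤ) := by omega
    have hqt_eq : 2 * (J.qt : ℤ) = (S.att : ℤ) := by omega
    have h1 : Rel S J (-(J.qt : ℤ)) (-δ) := Rneg _ _ he1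
    have h2 : Rel S J ((J.qt : ℤ)) (-δ) :=
      rel_congr S J ⟨-1, by omega⟩ ⟨0, by ring⟩ h1
    have hd2 := rel_injy S J h2 he1
    have h3 : (S.att : ℤ) ∣ 2 := by
      rcases hδ with rfl | rfl
      · rw [show (-(1:ℤ)) - 1 = -2 by ring] at hd2
        exact dvd_neg.mp hd2
      · rw [show (-(-1:ℤ)) - (-1) = 2 by ring] at hd2
        exact hd2
    have := Int.le_of_dvd (by norm_num) h3
    omega
  -- qt = qh
  have hqteqqh : J.qt = J.qh := by
    have h1 : Rel S J (-δ') (-(J.qh : ℤ)) := Rneg _ _ he2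
    have h2 : Rel S J ((J.qt : ℤ) + -(J.qh : ℤ)) (δ + ε * -δ') := hA _ _ h1
    have h3 : δ + ε * -δ' = 0 := by
      rcases hδ with rfl | rfl <;> rcases hδ' with rfl | rfl <;> rcases hε with rfl | rfl <;>
        omega
    rw [h3] at h2
    have hd := rel_injx S J h2 (rel00 S J)
    rw [sub_zero] at hd
    have h4 : (J.qt : ℤ) + -(J.qh : ℤ) = 0 := by
      refine Int.eq_zero_of_abs_lt_dvd hd ?_
      rw [abs_lt]
      omega
    omega
  refine ⟨?_, hqteqqh⟩
  -- the square congruence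
  have hqt_odd : Odd ((J.qt : ℤ)) := qt_odd S J hr2 hdvd hδ he1
  have hδ2 : δ * δ = 1 := by rcases hδ with rfl | rfl <;> norm_num
  have hu' : ∃ u : ℤ, (J.qt : ℤ) + δ = 2 * u := by
    obtain ⟨t, ht⟩ := hqt_odd
    rcases hδ with rfl | rfl
    · exact ⟨t + 1, by omega⟩
    · exact ⟨t, by omega⟩
  obtain ⟨u, hu⟩ := hu'
  set q : ℤ := (J.qt : ℤ) with hqdef
  have hq2 : q = 2 * u - δ := by omega
  rcases hε with rfl | rfl
  · -- ε = 1 : q² ≡ 1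
    left
    have hA1 : ∀ m n : ℤ, Rel S J m n → Rel S J (q + n) (δ + m) := by
      intro m n h
      have h2 := hA m n h
      rwa [one_mul] at h2
    have hA2 : ∀ m n : ℤ, Rel S J m n → Rel S J (m + (q + δ)) (n + (q + δ)) := by
      intro m n h
      have h2 := hA1 _ _ (hA1 _ _ h)
      exact rel_arg S J h2 (by ring) (by ring)
    have hPhi2 : ∀ m n : ℤ, Rel S J m n → Rel S J (m + (q - δ)) (n + (-(q - δ))) := by
      intro m n h
      have h2 := hA1 _ _ (Rneg _ _ (hA1 _ _ (Rneg _ _ h)))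
      exact rel_arg S J h2 (by ring) (by ring)
    have hiter1 := rel_iter S J (q + δ) (q + δ) hA2
    have hiter2 := rel_iter S J (q - δ) (-(q - δ)) hPhi2
    have P1 := hiter1 (u - δ - 1) _ _ he1
    have P2 := hiter2 u _ _ P1
    have hx : q + (u - δ - 1) * (q + δ) + u * (q - δ) = q * q - 1 - δ := by
      rw [hq2]
      rcases hδ with rfl | rfl <;> ring
    have hy : δ + (u - δ - 1) * (q + δ) + u * (-(q - δ)) = -q := by
      rw [hq2]
      rcases hδ with rfl | rfl <;> ring
    have P3 : Rel S J (q * q - 1 - δ) (-q) := rel_arg S J P2 hx hy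
    have P4 := hA1 _ _ P3
    have P5 : Rel S J 0 (q * q - 1) := rel_arg S J P4 (by ring) (by ring)
    have hd := rel_injy S J P5 (rel00 S J)
    rw [sub_zero] at hd
    exact hd
  · -- ε = -1 : q² ≡ -1
    right
    have hA1 : ∀ m n : ℤ, Rel S J m n → Rel S J (q + n) (δ - m) := by
      intro m n h
      have h2 := hA m n h
      exact rel_arg S J h2 rfl (by ring)
    have hT2 : ∀ m n : ℤ, Rel S J m n → Rel S J (m + (-(2*q))) (n + (-(2*δ))) := by
      intro m n h
      have h2 := Rneg _ _ (hA1 _ _ (Rneg _ _ (hA1 _ _ (hA1 _ _ (hA1 _ _ h)))))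
      exact rel_arg S J h2 (by ring) (by ring)
    have hiter := rel_iter S J (-(2*q)) (-(2*δ)) hT2
    have P1 := hiter (δ * u) _ _ he1
    have hx : q + δ * u * (-(2*q)) = -δ * (q * q) := by
      rw [hq2]
      rcases hδ with rfl | rfl <;> ring
    have hy : δ + δ * u * (-(2*δ)) = -q := by
      rw [hq2]
      rcases hδ with rfl | rfl <;> ring
    have P3 : Rel S J (-δ * (q * q)) (-q) := rel_arg S J P1 hx hy
    have P4 := hA1 _ _ P3
    have P5 : Rel S J 0 (δ * (q * q + 1)) := rel_arg S J P4 (by ring) (by ring)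
    have hd := rel_injy S J P5 (rel00 S J)
    rw [sub_zero] at hd
    rcases hδ with rfl | rfl
    · rwa [one_mul] at hd
    · rw [show (-1 : ℤ) * (q * q + 1) = -(q * q + 1) by ring] at hd
      exact dvd_neg.mp hd

end Endgame

end P14

end HalfArc


open HalfArc

/-- Lemma 6.1 of the paper: if `a ∤ r` and `a ≠ |V(Γ)|` then
`q² ≡ ±1 (mod a)` and `q_t = q_h`. -/
theorem statement_14 {V : Type*} (S : Setup V) (J : JumpData S)
    (hdvd : ¬ S.att ∣ S.r) (hcard : S.att ≠ Nat.card V) :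
    (((J.jump * J.jump : ℕ) : ZMod S.att) = 1 ∨
      ((J.jump * J.jump : ℕ) : ZMod S.att) = -1) ∧
    J.qt = J.qh := by
  obtain ⟨hdisj, hqq⟩ := P14.endgame S J hdvd
  haveI : NeZero S.att := ⟨S.att_pos.ne'⟩
  have hjump : J.jump = J.qt := by
    simp [JumpData.jump, hqq]
  refine ⟨?_, hqq⟩
  have hcast : ((J.jump * J.jump : ℕ) : ZMod S.att)
      = (((J.qt : ℤ) * (J.qt : ℤ) : ℤ) : ZMod S.att) := by
    rw [hjump]
    push_cast
    ring
  rcases hdisj with h | h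
  · left
    rw [hcast]
    have h0 : ((((J.qt : ℤ) * (J.qt : ℤ) - 1 : ℤ)) : ZMod S.att) = 0 :=
      (ZMod.intCast_zmod_eq_zero_iff_dvd _ _).mpr h
    push_cast at h0 ⊢
    exact sub_eq_zero.mp h0
  · right
    rw [hcast]
    have h0 : ((((J.qt : ℤ) * (J.qt : ℤ) + 1 : ℤ)) : ZMod S.att) = 0 :=
      (ZMod.intCast_zmod_eq_zero_iff_dvd _ _).mpr h
    push_cast at h0 ⊢
    exact eq_neg_of_add_eq_zero_left h0
end
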